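/- For every POMDP G with absorbing target set T, the belief-support-based strategy σ_Allow is almost-sure winning for the reachability objective Reach(T) from every belief-support U ∈ BeliefWin(G,T), i.e., when the initial distribution is uniform on U, playing σ_Allow reaches T with probability 1. -/

import Mathlib

open Finset Filter
open scoped Classical

set_option linter.unusedSectionVars false

noncomputable section

/-- A finite history of a play: the current state together with the
(reversed) list of past steps; an entry `(a, s')` means: the action `a`
was taken from the state `s'` (leading to the next recorded state). -/
abbrev Hist (S A : Type) := S × List (A × S)

/-- The observation–action sequence of a history. -/
def obsHist {S A Z : Type} (O : S → Z) (h : Hist S A) : Z × List (A × Z) :=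
  (O h.1, h.2.map fun p => (p.1, O p.2))

/-- An observation-based (randomized, history-dependent) strategy. -/
structure Strategy (S A Z : Type) [Fintype A] (O : S → Z) where
  act : Hist S A → A → ℝ
  act_nonneg : ∀ h a, 0 ≤ act h a
  act_sum : ∀ h, ∑ a, act h a = 1
  obsBased : ∀ h h', obsHist O h = obsHist O h' → act h = act h'

/-- A partially observable Markov decision process. -/
structure POMDP (S A Z : Type) [Fintype S] [Fintype A] [Fintype Z] where
  δ : S → A → S → ℝ
  δ_nonneg : ∀ s a s', 0 ≤ δ s a s'
  δ_sum : ∀ s a, ∑ s', δ s a s' = 1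
  obs : S → Z
  init : S → ℝ
  init_nonneg : ∀ s, 0 ≤ init s
  init_sum : ∑ s, init s = 1
  init_obs : ∀ s s', 0 < init s → 0 < init s' → obs s = obs s'

namespace POMDP

variable {S A Z : Type} [Fintype S] [Fintype A] [Fintype Z]

/-- The target set `T` consists of absorbing states. -/
def Absorbing (M : POMDP S A Z) (T : Set S) : Prop :=
  ∀ t ∈ T, ∀ a, M.δ t a t = 1

/-- Probability that after `n` steps the process has followed exactly the
history `(s, l)` (so `l` has length `n`). -/
def hprobAux (M : POMDP S A Z) (σ : Strategy S A Z M.obs) : ℕ → S → List (A × S) → ℝ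
  | 0, s, l => if l = [] then M.init s else 0
  | n+1, s, l =>
    match l with
    | [] => 0
    | (a, s') :: rest => hprobAux M σ n s' rest * σ.act (s', rest) a * M.δ s' a s

def hprob (M : POMDP S A Z) (σ : Strategy S A Z M.obs) (n : ℕ) (h : Hist S A) : ℝ :=
  M.hprobAux σ n h.1 h.2

/-- The state sequence of a history visits the set `T`. -/
def visitsT (T : Set S) (h : Hist S A) : Prop :=
  h.1 ∈ T ∨ ∃ p ∈ h.2, p.2 ∈ T

/-- Probability of reaching `T` within the first `n` steps. -/
def probReachBy (M : POMDP S A Z) (T : Set S) (σ : Strategy S A Z M.obs) (n : ℕ) : ℝ :=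
  ∑' h : Hist S A, if visitsT T h then M.hprob σ n h else 0

/-- Probability of the reachability objective `Reach(T)`. -/
def probReach (M : POMDP S A Z) (T : Set S) (σ : Strategy S A Z M.obs) : ℝ :=
  ⨆ n, M.probReachBy T σ n

/-- The strategy `σ` is almost-sure winning for `Reach(T)`. -/
def AlmostSure (M : POMDP S A Z) (T : Set S) (σ : Strategy S A Z M.obs) : Prop :=
  M.probReach T σ = 1

/-- Accumulated cost along a history. -/
def totalCostAux (c : S → A → ℝ) : S → List (A × S) → ℝ
  | _, [] => 0
  | _, (a, s') :: rest => totalCostAux c s' rest + c s' a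

def totalCostH (c : S → A → ℝ) (h : Hist S A) : ℝ := totalCostAux c h.1 h.2

/-- Expected total cost of the first `n` steps, i.e. `E[Total_{n-1}]`
(in particular `E[Total_k] = expTotalSteps M c σ (k+1)`). -/
def expTotalSteps (M : POMDP S A Z) (c : S → A → ℝ) (σ : Strategy S A Z M.obs) (n : ℕ) : ℝ :=
  ∑' h : Hist S A, M.hprob σ n h * totalCostH c h

/-- The value `Val(σ) = E[Total]` of a strategy, as the limit (limsup) of the
expected costs of the finite prefixes. -/
def Val (M : POMDP S A Z) (c : S → A → ℝ) (σ : Strategy S A Z M.obs) : EReal :=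
  Filter.limsup (fun n => ((M.expTotalSteps c σ n : ℝ) : EReal)) Filter.atTop

/-- `optCost`: the infimum of the values of almost-sure winning strategies. -/
def optCost (M : POMDP S A Z) (T : Set S) (c : S → A → ℝ) : EReal :=
  ⨅ σ : {σ : Strategy S A Z M.obs // M.AlmostSure T σ}, M.Val c σ.1

end POMDP

namespace POMDP

variable {S A Z : Type} [Fintype S] [Fintype A] [Fintype Z]

/-- Uniform distribution over a finite set of states. -/
def uniformS (U : Finset S) : S → ℝ := fun s => if s ∈ U then ((U.card : ℝ))⁻¹ else 0

lemma uniformS_nonneg (U : Finset S) (s : S) : 0 ≤ uniformS U s := by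
  unfold uniformS; split_ifs <;> positivity

lemma uniformS_sum (U : Finset S) (h : U.Nonempty) : ∑ s, uniformS U s = 1 := by
  unfold uniformS
  rw [Finset.sum_ite_mem, Finset.univ_inter, Finset.sum_const, nsmul_eq_mul,
    mul_inv_cancel₀]
  exact_mod_cast Finset.card_ne_zero.mpr h

lemma uniformS_mem {U : Finset S} {s : S} (h : 0 < uniformS U s) : s ∈ U := by
  by_contra hc; simp [uniformS, hc] at h

/-- The POMDP `M` with the initial distribution replaced by the uniform
distribution over `U`. -/
def reinit (M : POMDP S A Z) (U : Finset S) (hU : U.Nonempty)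
    (hobs : ∀ s ∈ U, ∀ s' ∈ U, M.obs s = M.obs s') : POMDP S A Z :=
  { M with
    init := uniformS U
    init_nonneg := uniformS_nonneg U
    init_sum := uniformS_sum U hU
    init_obs := fun s s' hs hs' => hobs s (uniformS_mem hs) s' (uniformS_mem hs') }

/-- The POMDP `M` with the initial distribution replaced by the Dirac
distribution at `s0`. -/
def resetDirac (M : POMDP S A Z) (s0 : S) : POMDP S A Z :=
  { M with
    init := fun s => if s = s0 then 1 else 0
    init_nonneg := by intro s; split_ifs <;> norm_num
    init_sum := by simp
    init_obs := by
      intro s s' hs hs'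
      have h1 : s = s0 := by by_contra hc; simp [hc] at hs
      have h2 : s' = s0 := by by_contra hc; simp [hc] at hs'
      rw [h1, h2] }

/-- The set of almost-sure winning belief-supports: those `U` from which
(with the uniform initial distribution on `U`) some strategy wins
`Reach(T)` almost-surely. -/
def BeliefWin (M : POMDP S A Z) (T : Set S) : Set (Finset S) :=
  {U | ∃ (hU : U.Nonempty) (hobs : ∀ s ∈ U, ∀ s' ∈ U, M.obs s = M.obs s'),
      ∃ σ : Strategy S A Z M.obs, (M.reinit U hU hobs).AlmostSure T σ}

/-- Belief-support update. -/
def updateF (M : POMDP S A Z) (U : Finset S) (z : Z) (a : A) : Finset S :=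
  univ.filter (fun t => M.obs t = z ∧ ∃ s ∈ U, 0 < M.δ s a t)

/-- Allowed actions at a belief-support `U`. -/
def AllowSet (M : POMDP S A Z) (T : Set S) (U : Finset S) : Set A :=
  {a | ∀ z, (M.updateF U z a).Nonempty → M.updateF U z a ∈ M.BeliefWin T}

def allowFin (M : POMDP S A Z) (T : Set S) (U : Finset S) : Finset A :=
  univ.filter (· ∈ M.AllowSet T U)

/-- The support of the initial distribution, as a belief-support. -/
def suppInitF (M : POMDP S A Z) : Finset S := univ.filter (fun s => 0 < M.init s)

/-- Belief-support after a history, starting from the initial belief-support `U0`. -/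
def beliefOfFromAux (M : POMDP S A Z) (U0 : Finset S) : S → List (A × S) → Finset S
  | s, [] => U0.filter (fun t => M.obs t = M.obs s)
  | s, (a, s') :: rest => M.updateF (M.beliefOfFromAux U0 s' rest) (M.obs s) a

def beliefOfFrom (M : POMDP S A Z) (U0 : Finset S) (h : Hist S A) : Finset S :=
  M.beliefOfFromAux U0 h.1 h.2

/-- Belief-support after a history (with the initial belief-support being
the support of the initial distribution). -/
def beliefOf (M : POMDP S A Z) (h : Hist S A) : Finset S :=
  M.beliefOfFrom M.suppInitF h

lemma beliefOfFromAux_obs (M : POMDP S A Z) (U0 : Finset S) :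
    ∀ (l l' : List (A × S)) (s s' : S),
      l.map (fun p => (p.1, M.obs p.2)) = l'.map (fun p => (p.1, M.obs p.2)) →
      M.obs s = M.obs s' →
      M.beliefOfFromAux U0 s l = M.beliefOfFromAux U0 s' l'
  | [], [], s, s', _, hs => by simp [beliefOfFromAux, hs]
  | [], (_ :: _), _, _, hmap, _ => by simp at hmap
  | (_ :: _), [], _, _, hmap, _ => by simp at hmap
  | ((a, t) :: r), ((a', t') :: r'), s, s', hmap, hs => by
      simp only [List.map_cons, List.cons.injEq, Prod.mk.injEq] at hmap
      obtain ⟨⟨ha, ht⟩, hr⟩ := hmap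
      simp only [beliefOfFromAux]
      rw [M.beliefOfFromAux_obs U0 r r' t t' hr ht, hs, ha]

/-- Uniform distribution over a finite set of actions. -/
def uniformA (F : Finset A) : A → ℝ := fun a => if a ∈ F then ((F.card : ℝ))⁻¹ else 0

lemma uniformA_nonneg (F : Finset A) (a : A) : 0 ≤ uniformA F a := by
  unfold uniformA; split_ifs <;> positivity

lemma uniformA_sum (F : Finset A) (h : F.Nonempty) : ∑ a, uniformA F a = 1 := by
  unfold uniformA
  rw [Finset.sum_ite_mem, Finset.univ_inter, Finset.sum_const, nsmul_eq_mul,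
    mul_inv_cancel₀]
  exact_mod_cast Finset.card_ne_zero.mpr h

/-- The action distribution of `σ_Allow` (with initial belief-support `U0`):
uniform over the allowed actions of the current belief-support (with a
uniform fallback where no action is allowed). -/
def actAllowFrom (M : POMDP S A Z) (T : Set S) (U0 : Finset S) (h : Hist S A) : A → ℝ :=
  if (M.allowFin T (M.beliefOfFrom U0 h)).Nonempty
  then uniformA (M.allowFin T (M.beliefOfFrom U0 h))
  else uniformA (univ : Finset A)

/-- The belief-support based strategy `σ_Allow` (tracking beliefs from `U0`). -/
def stratAllowFrom [Nonempty A] (M : POMDP S A Z) (T : Set S) (U0 : Finset S) :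
    Strategy S A Z M.obs where
  act := M.actAllowFrom T U0
  act_nonneg := by
    intro h a; unfold actAllowFrom; split_ifs <;> exact uniformA_nonneg _ _
  act_sum := by
    intro h; unfold actAllowFrom; split_ifs with hne
    · exact uniformA_sum _ hne
    · exact uniformA_sum _ univ_nonempty
  obsBased := by
    intro h h' hobs
    have : M.beliefOfFrom U0 h = M.beliefOfFrom U0 h' := by
      unfold beliefOfFrom
      exact M.beliefOfFromAux_obs U0 h.2 h'.2 h.1 h'.1
        (congrArg Prod.snd hobs) (congrArg Prod.fst hobs)
    unfold actAllowFrom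
    rw [this]

/-- `σ_Allow`. -/
def stratAllow [Nonempty A] (M : POMDP S A Z) (T : Set S) : Strategy S A Z M.obs :=
  M.stratAllowFrom T M.suppInitF

/-- `T_Allow(s, U)`: the expected total cost of `σ_Allow` started in the
state `s` with the initial belief-support `U`. -/
def TAllow [Nonempty A] (M : POMDP S A Z) (T : Set S) (c : S → A → ℝ) (s : S) (U : Finset S) :
    EReal :=
  (M.resetDirac s).Val c (M.stratAllowFrom T U)

/-- `U_Allow`: the maximal expected total cost of `σ_Allow` over all
almost-sure winning belief-supports `U` and states `s ∈ U`. -/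
def UAllow [Nonempty A] (M : POMDP S A Z) (T : Set S) (c : S → A → ℝ) : EReal :=
  ⨆ U ∈ M.BeliefWin T, ⨆ s ∈ U, M.TAllow T c s U

end POMDP

namespace POMDP

variable {S A Z : Type} [Fintype S] [Fintype A] [Fintype Z]

/-- Normalization of a nonnegative function into a distribution. -/
def normalize (f : S → ℝ) : S → ℝ := fun t => f t / ∑ u, f u

/-- Support of an information state. -/
def suppF (b : S → ℝ) : Finset S := univ.filter (fun s => b s ≠ 0)

/-- The information state (posterior distribution) after a history. -/
def infoOfAux (M : POMDP S A Z) : S → List (A × S) → S → ℝ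
  | s, [] => normalize (fun t => if M.obs t = M.obs s then M.init t else 0)
  | s, (a, s') :: rest =>
      normalize (fun t => if M.obs t = M.obs s then ∑ u, M.infoOfAux s' rest u * M.δ u a t else 0)

def infoOf (M : POMDP S A Z) (h : Hist S A) : S → ℝ := M.infoOfAux h.1 h.2

lemma infoOfAux_obs (M : POMDP S A Z) :
    ∀ (l l' : List (A × S)) (s s' : S),
      l.map (fun p => (p.1, M.obs p.2)) = l'.map (fun p => (p.1, M.obs p.2)) →
      M.obs s = M.obs s' →
      M.infoOfAux s l = M.infoOfAux s' l'
  | [], [], s, s', _, hs => by simp [infoOfAux, hs]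
  | [], (_ :: _), _, _, hmap, _ => by simp at hmap
  | (_ :: _), [], _, _, hmap, _ => by simp at hmap
  | ((a, t) :: r), ((a', t') :: r'), s, s', hmap, hs => by
      simp only [List.map_cons, List.cons.injEq, Prod.mk.injEq] at hmap
      obtain ⟨⟨ha, ht⟩, hr⟩ := hmap
      simp only [infoOfAux]
      rw [M.infoOfAux_obs r r' t t' hr ht, hs, ha]

/-- Expected one-step cost `c'(b,a)` at an information state. -/
def cinfo (c : S → A → ℝ) (b : S → ℝ) (a : A) : ℝ := ∑ s, b s * c s a

/-- Probability of observing `z` after playing `a` at information state `b`. -/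
def obsProb (M : POMDP S A Z) (b : S → ℝ) (a : A) (z : Z) : ℝ :=
  ∑ t, if M.obs t = z then ∑ u, b u * M.δ u a t else 0

/-- Bayesian update of the information state `b` under action `a` and
observation `z`. -/
def postInfo (M : POMDP S A Z) (b : S → ℝ) (a : A) (z : Z) : S → ℝ :=
  normalize (fun t => if M.obs t = z then ∑ u, b u * M.δ u a t else 0)

/-- The allowed-action-restricted finite-horizon value iteration `V*_n`. -/
def Vstar (M : POMDP S A Z) (T : Set S) (c : S → A → ℝ) : ℕ → (S → ℝ) → ℝ
  | 0, _ => 0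
  | n+1, b =>
    if h : (M.allowFin T (suppF b)).Nonempty then
      (M.allowFin T (suppF b)).inf' h
        (fun a => cinfo c b a + ∑ z, M.obsProb b a z * M.Vstar T c n (M.postInfo b a z))
    else 0

/-- An allowed action attaining the minimum of the value iteration with
`n` steps remaining at information state `b`. -/
def foAct [Nonempty A] (M : POMDP S A Z) (T : Set S) (c : S → A → ℝ) : ℕ → (S → ℝ) → A
  | 0, _ => Classical.arbitrary A
  | n+1, b =>
    if h : (M.allowFin T (suppF b)).Nonempty then
      Classical.choose (Finset.exists_mem_eq_inf' h
        (fun a => cinfo c b a + ∑ z, M.obsProb b a z * M.Vstar T c n (M.postInfo b a z)))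
    else Classical.arbitrary A

/-- The action distribution of the finite-horizon optimal strategy `σFO_k`. -/
def actFO [Nonempty A] (M : POMDP S A Z) (T : Set S) (c : S → A → ℝ) (k : ℕ) (h : Hist S A) :
    A → ℝ :=
  fun a => if a = M.foAct T c (k - h.2.length) (M.infoOf h) then 1 else 0

lemma length_eq_of_obsHist {h h' : Hist S A} {O : S → Z} (he : obsHist O h = obsHist O h') :
    h.2.length = h'.2.length := by
  have := congrArg (fun x => (Prod.snd x).length) he
  simpa [obsHist] using this

/-- The (allowed-action-restricted) finite-horizon optimal strategy `σFO_k`. -/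
def stratFO [Nonempty A] (M : POMDP S A Z) (T : Set S) (c : S → A → ℝ) (k : ℕ) :
    Strategy S A Z M.obs where
  act := M.actFO T c k
  act_nonneg := by intro h a; unfold actFO; split_ifs <;> norm_num
  act_sum := by intro h; unfold actFO; simp
  obsBased := by
    intro h h' hobs
    have hlen : h.2.length = h'.2.length := length_eq_of_obsHist hobs
    have hinfo : M.infoOf h = M.infoOf h' := by
      unfold infoOf
      exact M.infoOfAux_obs h.2 h'.2 h.1 h'.1
        (congrArg Prod.snd hobs) (congrArg Prod.fst hobs)
    unfold actFO
    rw [hlen, hinfo]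

/-- The strategy `σ*_k`: play `σFO_k` for the first `k` steps, then `σ_Allow`. -/
def stratStar [Nonempty A] (M : POMDP S A Z) (T : Set S) (c : S → A → ℝ) (k : ℕ) :
    Strategy S A Z M.obs where
  act := fun h =>
    if h.2.length < k then M.actFO T c k h else M.actAllowFrom T M.suppInitF h
  act_nonneg := by
    intro h a; split_ifs with hl
    · exact (M.stratFO T c k).act_nonneg h a
    · exact (M.stratAllowFrom T M.suppInitF).act_nonneg h a
  act_sum := by
    intro h; split_ifs with hl
    · exact (M.stratFO T c k).act_sum h
    · exact (M.stratAllowFrom T M.suppInitF).act_sum h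
  obsBased := by
    intro h h' hobs
    have hlen : h.2.length = h'.2.length := length_eq_of_obsHist hobs
    rw [hlen]
    split_ifs with hl
    · exact (M.stratFO T c k).obsBased h h' hobs
    · exact (M.stratAllowFrom T M.suppInitF).obsBased h h' hobs

/-- `α_k`: the probability that `T` is not reached within the first `k`
steps when playing `σ*_k`. -/
def alphaK [Nonempty A] (M : POMDP S A Z) (T : Set S) (c : S → A → ℝ) (k : ℕ) : ℝ :=
  1 - M.probReachBy T (M.stratStar T c k) k

end POMDP


namespace POMDP
variable {S A Z : Type} [Fintype S] [Fintype A] [Fintype Z]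
-- ==================== NEW MATERIAL ====================
attribute [reducible] reinit resetDirac

def listFin (S A : Type) [Fintype S] [Fintype A] : ℕ → Finset (List (A × S))
  | 0 => {[]}
  | n+1 => ((univ : Finset (A × S)) ×ˢ listFin S A n).image (fun p => p.1 :: p.2)

lemma mem_listFin : ∀ (n : ℕ) (l : List (A × S)), l ∈ listFin S A n ↔ l.length = n
  | 0, l => by simp [listFin, List.length_eq_zero_iff]
  | n+1, l => by
    simp only [listFin, mem_image, mem_product, mem_univ, true_and]
    constructor
    · rintro ⟨p, hp, rfl⟩
      simp [(mem_listFin n p.2).1 hp]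
    · intro hl
      cases l with
      | nil => simp at hl
      | cons x xs => exact ⟨(x, xs), (mem_listFin n xs).2 (by simpa using hl), rfl⟩

def histFinset (S A : Type) [Fintype S] [Fintype A] (n : ℕ) : Finset (Hist S A) :=
  (univ : Finset S) ×ˢ listFin S A n

lemma mem_histFinset (n : ℕ) (h : Hist S A) : h ∈ histFinset S A n ↔ h.2.length = n := by
  cases h; simp [histFinset, mem_listFin]

lemma sum_listFin_succ (n : ℕ) (F : List (A × S) → ℝ) :
    ∑ l ∈ listFin S A (n+1), F l = ∑ m ∈ listFin S A n, ∑ a, ∑ t, F ((a, t) :: m) := by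
  rw [show listFin S A (n+1)
      = ((univ : Finset (A × S)) ×ˢ listFin S A n).image (fun p => p.1 :: p.2) from rfl,
    Finset.sum_image (by rintro ⟨a, b⟩ _ ⟨c, d⟩ _ h; simpa using h)]
  rw [Finset.sum_product, Finset.sum_comm]
  exact Finset.sum_congr rfl fun m _ => by rw [Fintype.sum_prod_type]

lemma sum_histFinset_succ (n : ℕ) (F : Hist S A → ℝ) :
    ∑ H ∈ histFinset S A (n+1), F H
      = ∑ h ∈ histFinset S A n, ∑ a, ∑ t, F (t, (a, h.1) :: h.2) := by
  rw [histFinset, Finset.sum_product]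
  have h1 : ∀ t : S, ∑ l ∈ listFin S A (n+1), F (t, l)
      = ∑ m ∈ listFin S A n, ∑ a, ∑ s, F (t, (a, s) :: m) := fun t =>
    sum_listFin_succ n (fun l => F (t, l))
  calc ∑ t, ∑ l ∈ listFin S A (n+1), F (t, l)
      = ∑ t, ∑ m ∈ listFin S A n, ∑ a, ∑ s, F (t, (a, s) :: m) :=
        Finset.sum_congr rfl fun t _ => h1 t
    _ = ∑ t, ∑ m ∈ listFin S A n, ∑ s, ∑ a, F (t, (a, s) :: m) :=
        Finset.sum_congr rfl fun t _ => Finset.sum_congr rfl fun m _ => Finset.sum_comm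
    _ = ∑ t, ∑ s, ∑ m ∈ listFin S A n, ∑ a, F (t, (a, s) :: m) :=
        Finset.sum_congr rfl fun t _ => Finset.sum_comm
    _ = ∑ s, ∑ t, ∑ m ∈ listFin S A n, ∑ a, F (t, (a, s) :: m) := Finset.sum_comm
    _ = ∑ s, ∑ m ∈ listFin S A n, ∑ t, ∑ a, F (t, (a, s) :: m) :=
        Finset.sum_congr rfl fun s _ => Finset.sum_comm
    _ = ∑ s, ∑ m ∈ listFin S A n, ∑ a, ∑ t, F (t, (a, s) :: m) :=
        Finset.sum_congr rfl fun s _ => Finset.sum_congr rfl fun m _ => Finset.sum_comm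
    _ = ∑ h ∈ histFinset S A n, ∑ a, ∑ t, F (t, (a, h.1) :: h.2) := by
        rw [histFinset, Finset.sum_product]

variable (M : POMDP S A Z) (σ : Strategy S A Z M.obs) (T : Set S)

lemma hprobAux_nonneg : ∀ (n : ℕ) (s : S) (l : List (A × S)), 0 ≤ M.hprobAux σ n s l
  | 0, s, l => by
    simp only [hprobAux]; split_ifs
    · exact M.init_nonneg s
    · exact le_refl 0
  | n+1, s, l => by
    cases l with
    | nil => simp [hprobAux]
    | cons p rest =>
      obtain ⟨a, s'⟩ := p
      simp only [hprobAux]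
      exact mul_nonneg (mul_nonneg (hprobAux_nonneg n s' rest)
        (σ.act_nonneg _ a)) (M.δ_nonneg s' a s)

lemma hprob_nonneg (n : ℕ) (h : Hist S A) : 0 ≤ M.hprob σ n h :=
  hprobAux_nonneg M σ n h.1 h.2

lemma hprobAux_len : ∀ (n : ℕ) (s : S) (l : List (A × S)), l.length ≠ n → M.hprobAux σ n s l = 0
  | 0, s, l, hl => by
    simp only [hprobAux]
    rw [if_neg]; intro h; apply hl; simp [h]
  | n+1, s, l, hl => by
    cases l with
    | nil => simp [hprobAux]
    | cons p rest =>
      obtain ⟨a, s'⟩ := p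
      simp only [hprobAux]
      rw [hprobAux_len n s' rest (by simpa using hl), zero_mul, zero_mul]

lemma hprob_succ (n : ℕ) (h : Hist S A) (a : A) (t : S) :
    M.hprob σ (n+1) (t, (a, h.1) :: h.2) = M.hprob σ n h * σ.act h a * M.δ h.1 a t := by
  cases h; rfl

lemma sum_step (n : ℕ) (h : Hist S A) :
    ∑ a, ∑ t, M.hprob σ (n+1) (t, (a, h.1) :: h.2) = M.hprob σ n h := by
  have : ∀ a, ∑ t, M.hprob σ (n+1) (t, (a, h.1) :: h.2) = M.hprob σ n h * σ.act h a := by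
    intro a
    rw [show (∑ t, M.hprob σ (n+1) (t, (a, h.1) :: h.2))
        = ∑ t, M.hprob σ n h * σ.act h a * M.δ h.1 a t from
      Finset.sum_congr rfl fun t _ => hprob_succ M σ n h a t]
    rw [← Finset.mul_sum, M.δ_sum, mul_one]
  rw [Finset.sum_congr rfl fun a _ => this a, ← Finset.mul_sum, σ.act_sum, mul_one]

lemma sum_hprob : ∀ n : ℕ, ∑ H ∈ histFinset S A n, M.hprob σ n H = 1
  | 0 => by
    rw [histFinset, Finset.sum_product]
    simp [listFin, hprob, hprobAux, M.init_sum]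
  | n+1 => by
    rw [sum_histFinset_succ n (M.hprob σ (n+1)),
      Finset.sum_congr rfl fun h _ => sum_step M σ n h]
    exact sum_hprob n

lemma probReachBy_eq_sum (n : ℕ) :
    M.probReachBy T σ n = ∑ H ∈ histFinset S A n, if visitsT T H then M.hprob σ n H else 0 := by
  apply tsum_eq_sum
  intro H hH
  rw [mem_histFinset] at hH
  rw [show M.hprob σ n H = 0 from hprobAux_len M σ n H.1 H.2 hH]
  simp

lemma probReachBy_nonneg (n : ℕ) : 0 ≤ M.probReachBy T σ n := by
  rw [probReachBy_eq_sum]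
  apply Finset.sum_nonneg
  intro H _
  split_ifs
  · exact hprob_nonneg M σ n H
  · exact le_refl 0

lemma probReachBy_le_one (n : ℕ) : M.probReachBy T σ n ≤ 1 := by
  rw [probReachBy_eq_sum, ← sum_hprob M σ n]
  apply Finset.sum_le_sum
  intro H _
  split_ifs
  · exact le_refl _
  · exact hprob_nonneg M σ n H

lemma visitsT_step {T : Set S} {h : Hist S A} (hv : visitsT T h) (a : A) (t : S) :
    visitsT T (t, (a, h.1) :: h.2) := by
  rcases hv with h1 | ⟨p, hp, hpT⟩
  · exact Or.inr ⟨(a, h.1), List.mem_cons_self, h1⟩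
  · exact Or.inr ⟨p, List.mem_cons_of_mem _ hp, hpT⟩

lemma probReachBy_mono : Monotone (M.probReachBy T σ) := by
  apply monotone_nat_of_le_succ
  intro n
  rw [probReachBy_eq_sum, probReachBy_eq_sum,
    sum_histFinset_succ n (fun H => if visitsT T H then M.hprob σ (n+1) H else 0)]
  apply Finset.sum_le_sum
  intro h _
  by_cases hv : visitsT T h
  · rw [if_pos hv, ← sum_step M σ n h]
    apply Finset.sum_le_sum
    intro a _
    apply Finset.sum_le_sum
    intro t _
    rw [if_pos (visitsT_step hv a t)]
  · rw [if_neg hv]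
    apply Finset.sum_nonneg; intro a _
    apply Finset.sum_nonneg; intro t _
    split_ifs
    · exact hprob_nonneg _ _ _ _
    · exact le_refl 0

def failProb (n : ℕ) : ℝ :=
  ∑ H ∈ histFinset S A n, if visitsT T H then 0 else M.hprob σ n H

lemma failProb_eq (n : ℕ) : M.failProb σ T n = 1 - M.probReachBy T σ n := by
  rw [probReachBy_eq_sum, ← sum_hprob M σ n, failProb, ← Finset.sum_sub_distrib]
  apply Finset.sum_congr rfl
  intro H _
  split_ifs <;> ring

end POMDP

namespace POMDP
variable {S A Z : Type} [Fintype S] [Fintype A] [Fintype Z]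

/-- Extend a history by a (reverse-chronological) list of steps. -/
def extendH : Hist S A → List (A × S) → Hist S A
  | h, [] => h
  | h, p :: m => (p.2, (p.1, (extendH h m).1) :: (extendH h m).2)

/-- Probability of a sequence of further steps, given transition kernel `d`
and action-distribution `π`. -/
def stepP (d : S → A → S → ℝ) (π : Hist S A → A → ℝ) : Hist S A → List (A × S) → ℝ
  | _, [] => 1
  | h, p :: m => stepP d π h m * π (extendH h m) p.1 * d (extendH h m).1 p.1 p.2

lemma extendH_append (m1 m2 : List (A × S)) (h : Hist S A) :
    extendH h (m1 ++ m2) = extendH (extendH h m2) m1 := by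
  induction m1 with
  | nil => rfl
  | cons p m1 ih => simp [extendH, ih]

lemma stepP_append (d : S → A → S → ℝ) (π : Hist S A → A → ℝ) (m1 m2 : List (A × S))
    (h : Hist S A) :
    stepP d π h (m1 ++ m2) = stepP d π h m2 * stepP d π (extendH h m2) m1 := by
  induction m1 with
  | nil => simp [stepP]
  | cons p m1 ih =>
    rw [show (p :: m1) ++ m2 = p :: (m1 ++ m2) from rfl]
    simp only [stepP]
    rw [ih, extendH_append]
    ring

lemma stepP_nonneg {d : S → A → S → ℝ} {π : Hist S A → A → ℝ}
    (hd : ∀ s a t, 0 ≤ d s a t) (hπ : ∀ h a, 0 ≤ π h a) (h : Hist S A) (m : List (A × S)) :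
    0 ≤ stepP d π h m := by
  induction m with
  | nil => norm_num [stepP]
  | cons p m ih => exact mul_nonneg (mul_nonneg ih (hπ _ _)) (hd _ _ _)

variable (M : POMDP S A Z) (σ : Strategy S A Z M.obs) (T : Set S)

lemma sum_stepP (h : Hist S A) : ∀ N : ℕ, ∑ m ∈ listFin S A N, stepP M.δ σ.act h m = 1
  | 0 => by simp [listFin, stepP]
  | N+1 => by
    rw [sum_listFin_succ N (stepP M.δ σ.act h)]
    have : ∀ m ∈ listFin S A N, ∑ a, ∑ t, stepP M.δ σ.act h ((a, t) :: m)
        = stepP M.δ σ.act h m := by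
      intro m _
      have h1 : ∀ a, ∑ t, stepP M.δ σ.act h ((a, t) :: m)
          = stepP M.δ σ.act h m * σ.act (extendH h m) a := by
        intro a
        simp only [stepP]
        rw [← Finset.mul_sum, M.δ_sum, mul_one]
      rw [Finset.sum_congr rfl fun a _ => h1 a, ← Finset.mul_sum, σ.act_sum, mul_one]
    rw [Finset.sum_congr rfl this]
    exact sum_stepP h N

lemma hprob_extendH : ∀ (m : List (A × S)) (h : Hist S A) (n : ℕ),
    M.hprob σ (n + m.length) (extendH h m) = M.hprob σ n h * stepP M.δ σ.act h m
  | [], h, n => by simp [extendH, stepP]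
  | (a, t) :: m, h, n => by
    have e1 : extendH h ((a, t) :: m) = (t, (a, (extendH h m).1) :: (extendH h m).2) := rfl
    have e2 : (n + ((a, t) :: m).length) = (n + m.length) + 1 := by
      simp [List.length_cons]; ring
    rw [e1, e2]
    have := hprob_succ M σ (n + m.length) (extendH h m) a t
    rw [show ((extendH h m).1 : S) = (extendH h m).1 from rfl] at this
    calc M.hprob σ ((n + m.length) + 1) (t, (a, (extendH h m).1) :: (extendH h m).2)
        = M.hprob σ (n + m.length) (extendH h m) * σ.act (extendH h m) a
            * M.δ (extendH h m).1 a t := hprob_succ M σ (n + m.length) (extendH h m) a t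
      _ = M.hprob σ n h * stepP M.δ σ.act h ((a, t) :: m) := by
          rw [hprob_extendH m h n]; simp only [stepP]; ring

lemma visitsT_extendH (m : List (A × S)) (h : Hist S A) :
    visitsT T (extendH h m) ↔ visitsT T h ∨ ∃ p ∈ m, p.2 ∈ T := by
  induction m with
  | nil => simp [extendH]
  | cons p m ih =>
    obtain ⟨a, t⟩ := p
    have : visitsT T (extendH h ((a, t) :: m))
        ↔ t ∈ T ∨ visitsT T (extendH h m) := by
      simp only [extendH, visitsT, List.mem_cons]
      constructor
      · rintro (h1 | ⟨p, (rfl | hp), hpT⟩)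
        · exact Or.inl h1
        · exact Or.inr (Or.inl hpT)
        · exact Or.inr (Or.inr ⟨p, hp, hpT⟩)
      · rintro (h1 | h2 | ⟨p, hp, hpT⟩)
        · exact Or.inl h1
        · exact Or.inr ⟨(a, (extendH h m).1), Or.inl rfl, h2⟩
        · exact Or.inr ⟨p, Or.inr hp, hpT⟩
    rw [this, ih]
    simp only [List.mem_cons]
    constructor
    · rintro (h1 | h2 | h3)
      · exact Or.inr ⟨(a, t), Or.inl rfl, h1⟩
      · exact Or.inl h2
      · obtain ⟨p, hp, hpT⟩ := h3; exact Or.inr ⟨p, Or.inr hp, hpT⟩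
    · rintro (h1 | ⟨p, (rfl | hp), hpT⟩)
      · exact Or.inr (Or.inl h1)
      · exact Or.inl hpT
      · exact Or.inr (Or.inr ⟨p, hp, hpT⟩)

/-- Decomposition of an `(n+N)`-step sum into an `n`-step prefix and an
`N`-step continuation. -/
lemma sum_extend : ∀ (N n : ℕ) (f : Hist S A → ℝ),
    ∑ H ∈ histFinset S A (n + N), M.hprob σ (n + N) H * f H
      = ∑ h ∈ histFinset S A n, M.hprob σ n h *
          ∑ m ∈ listFin S A N, stepP M.δ σ.act h m * f (extendH h m)
  | 0, n, f => by simp [listFin, stepP, extendH]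
  | N+1, n, f => by
    have e : n + (N + 1) = (n + N) + 1 := rfl
    rw [e, sum_histFinset_succ (n + N) (fun H => M.hprob σ ((n + N) + 1) H * f H)]
    have h1 : ∀ h : Hist S A,
        (∑ a, ∑ t, M.hprob σ ((n+N)+1) (t, (a, h.1) :: h.2) * f (t, (a, h.1) :: h.2))
          = M.hprob σ (n+N) h *
            ∑ a, ∑ t, σ.act h a * M.δ h.1 a t * f (t, (a, h.1) :: h.2) := by
      intro h
      rw [Finset.mul_sum]
      apply Finset.sum_congr rfl; intro a _
      rw [Finset.mul_sum]
      apply Finset.sum_congr rfl; intro t _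
      rw [hprob_succ M σ (n+N) h a t]; ring
    rw [Finset.sum_congr rfl fun h _ => h1 h]
    rw [sum_extend N n (fun h => ∑ a, ∑ t, σ.act h a * M.δ h.1 a t * f (t, (a, h.1) :: h.2))]
    apply Finset.sum_congr rfl; intro h _
    congr 1
    rw [sum_listFin_succ N (fun m => stepP M.δ σ.act h m * f (extendH h m))]
    apply Finset.sum_congr rfl; intro m _
    rw [Finset.mul_sum]
    apply Finset.sum_congr rfl; intro a _
    rw [Finset.mul_sum]
    apply Finset.sum_congr rfl; intro t _
    have e1 : extendH h ((a, t) :: m) = (t, (a, (extendH h m).1) :: (extendH h m).2) := rfl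
    simp only [stepP, e1]
    ring

/-- `failProb` at horizon `n + N`, decomposed. -/
lemma failProb_extend (N n : ℕ) :
    M.failProb σ T (n + N)
      = ∑ h ∈ histFinset S A n, M.hprob σ n h *
          ∑ m ∈ listFin S A N, stepP M.δ σ.act h m *
            (if visitsT T (extendH h m) then 0 else 1) := by
  rw [← sum_extend M σ N n (fun H => if visitsT T H then 0 else 1), failProb]
  apply Finset.sum_congr rfl; intro H _
  split_ifs <;> ring

end POMDP

namespace POMDP
variable {S A Z : Type} [Fintype S] [Fintype A] [Fintype Z]

section Transport

variable (M : POMDP S A Z)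

@[simp] lemma resetDirac_δ (u : S) : (M.resetDirac u).δ = M.δ := rfl
@[simp] lemma resetDirac_obs (u : S) : (M.resetDirac u).obs = M.obs := rfl
@[simp] lemma reinit_δ (U : Finset S) (hU : U.Nonempty) (hobs) :
    (M.reinit U hU hobs).δ = M.δ := rfl
@[simp] lemma reinit_obs (U : Finset S) (hU : U.Nonempty) (hobs) :
    (M.reinit U hU hobs).obs = M.obs := rfl

lemma reinit_reinit (U : Finset S) (hU : U.Nonempty) (hobs) (V : Finset S) (hV : V.Nonempty)
    (hobs' : ∀ s ∈ V, ∀ s' ∈ V, M.obs s = M.obs s') :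
    (M.reinit U hU hobs).reinit V hV hobs' = M.reinit V hV hobs' := rfl

lemma resetDirac_reinit (U : Finset S) (hU : U.Nonempty) (hobs) (u : S) :
    (M.reinit U hU hobs).resetDirac u = M.resetDirac u := rfl

lemma beliefWin_reinit (U : Finset S) (hU : U.Nonempty) (hobs) (T : Set S) :
    (M.reinit U hU hobs).BeliefWin T = M.BeliefWin T := rfl

lemma updateF_reinit (U : Finset S) (hU : U.Nonempty) (hobs) :
    (M.reinit U hU hobs).updateF = M.updateF := rfl

lemma allowFin_reinit (U : Finset S) (hU : U.Nonempty) (hobs) (T : Set S) :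
    (M.reinit U hU hobs).allowFin T = M.allowFin T := rfl

lemma beliefOfFromAux_reinit (U : Finset S) (hU : U.Nonempty) (hobs) (U0 : Finset S) :
    ∀ (l : List (A × S)) (s : S),
      (M.reinit U hU hobs).beliefOfFromAux U0 s l = M.beliefOfFromAux U0 s l
  | [], s => rfl
  | (a, s') :: rest, s => by
    simp only [beliefOfFromAux]
    rw [beliefOfFromAux_reinit U hU hobs U0 rest s']
    rfl

lemma beliefOfFrom_reinit (U : Finset S) (hU : U.Nonempty) (hobs) (U0 : Finset S)
    (h : Hist S A) :
    (M.reinit U hU hobs).beliefOfFrom U0 h = M.beliefOfFrom U0 h :=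
  beliefOfFromAux_reinit M U hU hobs U0 h.2 h.1

lemma suppInitF_reinit (U : Finset S) (hU : U.Nonempty) (hobs) :
    (M.reinit U hU hobs).suppInitF = U := by
  ext s
  simp only [suppInitF, mem_filter, mem_univ, true_and]
  show (0 < (if s ∈ U then ((U.card : ℝ))⁻¹ else 0)) ↔ s ∈ U
  split_ifs with h
  · refine ⟨fun _ => h, fun _ => ?_⟩
    have : (0 : ℝ) < U.card := by exact_mod_cast Finset.card_pos.mpr hU
    positivity
  · exact ⟨fun h0 => absurd h0 (lt_irrefl 0), fun h' => absurd h' h⟩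

end Transport

variable (M : POMDP S A Z) (σ : Strategy S A Z M.obs) (T : Set S)

lemma hprobAux_zero (s : S) (l : List (A × S)) :
    M.hprobAux σ 0 s l = if l = [] then M.init s else 0 := by
  simp [hprobAux]

lemma hprobAux_dirac : ∀ (n : ℕ) (s : S) (l : List (A × S)),
    M.hprobAux σ n s l = ∑ u, M.init u * (M.resetDirac u).hprobAux σ n s l
  | 0, s, l => by
    cases l with
    | nil =>
      rw [hprobAux_zero, if_pos rfl]
      have key : ∀ u : S, M.init u * (M.resetDirac u).hprobAux σ 0 s []
          = if s = u then M.init u else 0 := by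
        intro u
        rw [hprobAux_zero, if_pos rfl]
        show M.init u * (if s = u then (1:ℝ) else 0) = _
        split_ifs <;> ring
      rw [Finset.sum_congr rfl fun u _ => key u]
      simp
    | cons p l' =>
      rw [hprobAux_zero, if_neg (by simp)]
      have key : ∀ u : S, M.init u * (M.resetDirac u).hprobAux σ 0 s (p :: l') = 0 := by
        intro u
        rw [hprobAux_zero, if_neg (by simp)]; ring
      rw [Finset.sum_congr rfl fun u _ => key u]
      simp
  | n+1, s, l => by
    cases l with
    | nil => simp [hprobAux]
    | cons p rest =>
      obtain ⟨a, s'⟩ := p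
      simp only [hprobAux]
      rw [hprobAux_dirac n s' rest, Finset.sum_mul, Finset.sum_mul]
      apply Finset.sum_congr rfl
      intro u _
      ring

lemma probReachBy_dirac (n : ℕ) :
    M.probReachBy T σ n = ∑ u, M.init u * (M.resetDirac u).probReachBy T σ n := by
  rw [probReachBy_eq_sum]
  rw [Finset.sum_congr rfl (fun u (_ : u ∈ univ) => by
    rw [probReachBy_eq_sum (M.resetDirac u) σ T n, Finset.mul_sum])]
  rw [Finset.sum_comm]
  apply Finset.sum_congr rfl
  intro H _
  split_ifs with hv
  · exact hprobAux_dirac M σ n H.1 H.2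
  · simp

lemma ciSup_eq_one_of (f : ℕ → ℝ) (hb : ∀ n, f n ≤ 1)
    (h : ∀ ε : ℝ, 0 < ε → ∃ n, 1 - ε ≤ f n) : (⨆ n, f n) = 1 := by
  have hbdd : BddAbove (Set.range f) := ⟨1, by rintro x ⟨n, rfl⟩; exact hb n⟩
  apply le_antisymm (ciSup_le hb)
  by_contra hc
  push_neg at hc
  obtain ⟨n, hn⟩ := h ((1 - ⨆ n, f n)/2) (by linarith)
  have := le_ciSup hbdd n
  linarith

lemma exists_ge_of_ciSup_eq_one (f : ℕ → ℝ) (h : (⨆ n, f n) = 1)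
    {ε : ℝ} (hε : 0 < ε) : ∃ n, 1 - ε ≤ f n := by
  by_contra hc
  push_neg at hc
  have : (⨆ n, f n) ≤ 1 - ε := ciSup_le (fun n => (hc n).le)
  linarith

lemma almostSure_dirac (hA : M.AlmostSure T σ) {u : S} (hu : 0 < M.init u) :
    (M.resetDirac u).AlmostSure T σ := by
  unfold AlmostSure probReach at *
  apply ciSup_eq_one_of _ (fun n => probReachBy_le_one (M.resetDirac u) σ T n)
  intro ε hε
  obtain ⟨n, hn⟩ := exists_ge_of_ciSup_eq_one _ hA (mul_pos hu hε)
  refine ⟨n, ?_⟩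
  have hdec := probReachBy_dirac M σ T n
  set Pd : S → ℝ := fun v => (M.resetDirac v).probReachBy T σ n with hPd
  have hsplit : M.init u * Pd u + ∑ v ∈ univ.erase u, M.init v * Pd v
      = ∑ v, M.init v * Pd v := Finset.add_sum_erase univ (fun v => M.init v * Pd v) (mem_univ u)
  have herase : ∑ v ∈ univ.erase u, M.init v * Pd v ≤ ∑ v ∈ univ.erase u, M.init v :=
    Finset.sum_le_sum fun v _ => mul_le_of_le_one_right (M.init_nonneg v)
      (probReachBy_le_one (M.resetDirac v) σ T n)
  have herase2 : M.init u + ∑ v ∈ univ.erase u, M.init v = 1 := by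
    rw [Finset.add_sum_erase univ M.init (mem_univ u)]; exact M.init_sum
  have key : M.init u * (1 - ε) ≤ M.init u * Pd u := by
    have h1 : 1 - M.init u * ε ≤ ∑ v, M.init v * Pd v := by rw [← hdec]; exact hn
    linarith
  exact le_of_mul_le_mul_left key hu

lemma almostSure_of_dirac (h : ∀ u, 0 < M.init u → (M.resetDirac u).AlmostSure T σ) :
    M.AlmostSure T σ := by
  apply ciSup_eq_one_of _ (probReachBy_le_one M σ T)
  intro ε hε
  have hch : ∀ u : S, ∃ n, 0 < M.init u → 1 - ε ≤ (M.resetDirac u).probReachBy T σ n := by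
    intro u
    by_cases hu : 0 < M.init u
    · obtain ⟨n, hn⟩ := exists_ge_of_ciSup_eq_one _ (h u hu) hε
      exact ⟨n, fun _ => hn⟩
    · exact ⟨0, fun h' => absurd h' hu⟩
  choose nu hnu using hch
  refine ⟨univ.sup nu, ?_⟩
  rw [probReachBy_dirac M σ T _]
  have hpt : ∀ u : S, M.init u * (1 - ε)
      ≤ M.init u * (M.resetDirac u).probReachBy T σ (univ.sup nu) := by
    intro u
    rcases (M.init_nonneg u).lt_or_eq with hu | hu
    · apply mul_le_mul_of_nonneg_left _ (M.init_nonneg u)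
      calc (1 : ℝ) - ε ≤ (M.resetDirac u).probReachBy T σ (nu u) := hnu u hu
        _ ≤ (M.resetDirac u).probReachBy T σ (univ.sup nu) :=
          probReachBy_mono (M.resetDirac u) σ T (Finset.le_sup (mem_univ u))
    · rw [← hu]; simp
  calc 1 - ε = ∑ u, M.init u * (1 - ε) := by rw [← Finset.sum_mul, M.init_sum, one_mul]
    _ ≤ _ := Finset.sum_le_sum fun u _ => hpt u

lemma pos_factors {a b c : ℝ} (ha : 0 ≤ a) (hb : 0 ≤ b) (hc : 0 ≤ c) (h : 0 < a * b * c) :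
    0 < a ∧ 0 < b ∧ 0 < c := by
  have ha' : a ≠ 0 := fun h0 => by simp [h0] at h
  have hb' : b ≠ 0 := fun h0 => by simp [h0] at h
  have hc' : c ≠ 0 := fun h0 => by simp [h0] at h
  exact ⟨ha.lt_of_ne (Ne.symm ha'), hb.lt_of_ne (Ne.symm hb'), hc.lt_of_ne (Ne.symm hc')⟩

lemma hprobAux_cons_pos {n : ℕ} {x y : S} {a : A} {l : List (A × S)}
    (h : 0 < M.hprobAux σ (n+1) x ((a, y) :: l)) :
    0 < M.hprobAux σ n y l ∧ 0 < σ.act (y, l) a ∧ 0 < M.δ y a x := by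
  have := pos_factors (hprobAux_nonneg M σ n y l) (σ.act_nonneg (y, l) a) (M.δ_nonneg y a x)
    (by exact h)
  exact this

lemma absorbing_unique (habs : M.Absorbing T) {y : S} (hy : y ∈ T) (a : A) {x : S}
    (hx : 0 < M.δ y a x) : x = y := by
  by_contra hne
  have h1 : M.δ y a y + ∑ s ∈ univ.erase y, M.δ y a s = 1 := by
    rw [Finset.add_sum_erase univ (fun s => M.δ y a s) (mem_univ y)]; exact M.δ_sum y a
  have h2 : M.δ y a y = 1 := habs y hy a
  have h4 : M.δ y a x ≤ ∑ s ∈ univ.erase y, M.δ y a s :=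
    Finset.single_le_sum (fun s _ => M.δ_nonneg y a s)
      (Finset.mem_erase.mpr ⟨hne, mem_univ x⟩)
  linarith

lemma not_visitsT_of_pos (habs : M.Absorbing T) :
    ∀ (l : List (A × S)) (x : S), 0 < M.hprobAux σ l.length x l → x ∉ T → ¬ visitsT T (x, l)
  | [], x, _, hx => by
    rintro (h | ⟨p, hp, _⟩)
    · exact hx h
    · simp at hp
  | (a, y) :: l, x, hp, hx => by
    obtain ⟨h1, h2, h3⟩ := hprobAux_cons_pos M σ hp
    have hy : y ∉ T := fun hyT => hx ((absorbing_unique M T habs hyT a h3) ▸ hyT)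
    have ih := not_visitsT_of_pos habs l y h1 hy
    rintro (h | ⟨p, hp', hpT⟩)
    · exact hx h
    · rcases List.mem_cons.mp hp' with rfl | hp''
      · exact hy hpT
      · exact ih (Or.inr ⟨p, hp'', hpT⟩)

lemma head_mem_T_of_visits (habs : M.Absorbing T) {l : List (A × S)} {x : S}
    (hpos : 0 < M.hprobAux σ l.length x l) (hv : visitsT T (x, l)) : x ∈ T := by
  by_contra hx
  exact not_visitsT_of_pos M σ T habs l x hpos hx hv

lemma dirac_pos_visits {t : S} (ht : t ∈ T) :
    ∀ (l : List (A × S)) (x : S), 0 < (M.resetDirac t).hprobAux σ l.length x l →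
      visitsT T (x, l)
  | [], x, hp => by
    left
    have hx : x = t := by
      by_contra h
      have hz : (M.resetDirac t).hprobAux σ ([] : List (A × S)).length x [] = 0 := by
        show (M.resetDirac t).hprobAux σ 0 x [] = 0
        rw [hprobAux_zero, if_pos rfl]
        show (if x = t then (1:ℝ) else 0) = 0
        rw [if_neg h]
      rw [hz] at hp
      exact lt_irrefl 0 hp
    rwa [hx]
  | (a, y) :: l, x, hp => by
    obtain ⟨h1, _, _⟩ := hprobAux_cons_pos (M.resetDirac t) σ hp
    exact visitsT_step (dirac_pos_visits ht l y h1) a x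

lemma almostSure_resetDirac_of_target {t : S} (ht : t ∈ T) :
    (M.resetDirac t).AlmostSure T σ := by
  unfold AlmostSure probReach
  have hconst : ∀ n, (M.resetDirac t).probReachBy T σ n = 1 := by
    intro n
    rw [probReachBy_eq_sum, ← sum_hprob (M.resetDirac t) σ n]
    apply Finset.sum_congr rfl
    intro H hH
    rw [mem_histFinset] at hH
    rcases eq_or_lt_of_le (hprob_nonneg (M.resetDirac t) σ n H) with h0 | h0
    · split_ifs <;> simp [← h0]
    · rw [if_pos]
      obtain ⟨x, l⟩ := H
      have : l.length = n := hH
      exact dirac_pos_visits M σ T ht l x (by rw [this]; exact h0)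
  rw [show (fun n => (M.resetDirac t).probReachBy T σ n) = fun _ => (1:ℝ) from
    funext hconst]
  exact ciSup_const

end POMDP

namespace POMDP
variable {S A Z : Type} [Fintype S] [Fintype A] [Fintype Z]

/-- The strategy `σ` shifted by a fixed history tail. -/
def afterStrat {O : S → Z} (σ : Strategy S A Z O) (tail : List (A × S)) :
    Strategy S A Z O where
  act g := σ.act (g.1, g.2 ++ tail)
  act_nonneg g a := σ.act_nonneg _ a
  act_sum g := σ.act_sum _
  obsBased g g' he := by
    apply σ.obsBased
    unfold obsHist at he ⊢
    simp only [Prod.mk.injEq] at he ⊢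
    exact ⟨he.1, by rw [List.map_append, List.map_append, he.2]⟩

lemma afterStrat_act_congr {O : S → Z} (σ : Strategy S A Z O) {t1 t2 : List (A × S)}
    (ht : t1.map (fun p => (p.1, O p.2)) = t2.map (fun p => (p.1, O p.2))) :
    (afterStrat σ t1).act = (afterStrat σ t2).act := by
  funext g
  apply σ.obsBased
  unfold obsHist
  simp only [Prod.mk.injEq, List.map_append]
  exact ⟨trivial, by rw [ht]⟩

variable (M : POMDP S A Z)

lemma hprobAux_congr_act (σ1 σ2 : Strategy S A Z M.obs) (hact : σ1.act = σ2.act) :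
    ∀ (n : ℕ) (s : S) (l : List (A × S)), M.hprobAux σ1 n s l = M.hprobAux σ2 n s l
  | 0, s, l => by simp [hprobAux]
  | n+1, s, l => by
    cases l with
    | nil => simp [hprobAux]
    | cons p rest =>
      obtain ⟨a, s'⟩ := p
      simp only [hprobAux]
      rw [hprobAux_congr_act σ1 σ2 hact n s' rest, hact]

lemma failProb_congr_act (σ1 σ2 : Strategy S A Z M.obs) (hact : σ1.act = σ2.act)
    (T : Set S) (k : ℕ) : M.failProb σ1 T k = M.failProb σ2 T k := by
  unfold failProb
  apply Finset.sum_congr rfl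
  intro H _
  rw [show M.hprob σ1 k H = M.hprob σ2 k H from hprobAux_congr_act M σ1 σ2 hact k H.1 H.2]

lemma extendH_shift : ∀ (m : List (A × S)) (h : Hist S A),
    extendH h m = ((extendH ((h.1, []) : Hist S A) m).1, (extendH ((h.1, []) : Hist S A) m).2 ++ h.2)
  | [], h => by simp [extendH]
  | p :: m, h => by
    have ih := extendH_shift m h
    simp only [extendH]
    rw [ih]
    simp

lemma stepP_shift (σ : Strategy S A Z M.obs) : ∀ (m : List (A × S)) (h : Hist S A),
    stepP M.δ (afterStrat σ h.2).act ((h.1, []) : Hist S A) m = stepP M.δ σ.act h m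
  | [], h => rfl
  | p :: m, h => by
    simp only [stepP]
    rw [stepP_shift σ m h]
    have e := extendH_shift m h
    have e1 : (extendH ((h.1, []) : Hist S A) m).1 = (extendH h m).1 := by rw [e]
    have e2 : (afterStrat σ h.2).act (extendH ((h.1, []) : Hist S A) m) p.1
        = σ.act (extendH h m) p.1 := by
      show σ.act ((extendH ((h.1, []) : Hist S A) m).1,
        (extendH ((h.1, []) : Hist S A) m).2 ++ h.2) p.1 = _
      rw [← e]
    rw [e1, e2]

lemma visitsT_shift (T : Set S) (m : List (A × S)) (h : Hist S A) (hnv : ¬ visitsT T h) :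
    visitsT T (extendH ((h.1, []) : Hist S A) m) ↔ visitsT T (extendH h m) := by
  rw [visitsT_extendH, visitsT_extendH]
  have h1 : ¬ visitsT T ((h.1, []) : Hist S A) := by
    rintro (hh | ⟨p, hp, _⟩)
    · exact hnv (Or.inl hh)
    · simp at hp
  constructor
  · rintro (hv | hm)
    · exact absurd hv h1
    · exact Or.inr hm
  · rintro (hv | hm)
    · exact absurd hv hnv
    · exact Or.inr hm

/-- The failure probability of the shifted strategy from the endpoint of a
non-visiting history `h0` bounds the overall failure probability. -/
lemma failProb_after_le (σ : Strategy S A Z M.obs) (T : Set S) {n : ℕ} {h0 : Hist S A}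
    (h0len : h0.2.length = n) (h0nv : ¬ visitsT T h0) (k : ℕ) :
    M.hprob σ n h0 * (M.resetDirac h0.1).failProb (afterStrat σ h0.2) T k
      ≤ M.failProb σ T (n + k) := by
  have hD : (M.resetDirac h0.1).failProb (afterStrat σ h0.2) T k
      = ∑ m ∈ listFin S A k, stepP M.δ σ.act h0 m *
          (if visitsT T (extendH h0 m) then 0 else 1) := by
    have h1 := failProb_extend (M.resetDirac h0.1) (afterStrat σ h0.2) T k 0
    rw [show (0 + k) = k from Nat.zero_add k] at h1
    rw [h1]
    rw [show histFinset S A 0 = (univ : Finset S) ×ˢ ({[]} : Finset (List (A × S))) from rfl]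
    rw [Finset.sum_product]
    simp only [Finset.sum_singleton]
    have h2 : ∀ u : S, (M.resetDirac h0.1).hprob (afterStrat σ h0.2) 0 ((u, []) : Hist S A)
        = if u = h0.1 then 1 else 0 := by
      intro u
      show (M.resetDirac h0.1).hprobAux (afterStrat σ h0.2) 0 u [] = _
      rw [hprobAux_zero, if_pos rfl]
    have h3 : ∀ u : S, (M.resetDirac h0.1).hprob (afterStrat σ h0.2) 0 ((u, []) : Hist S A) *
        (∑ m ∈ listFin S A k, stepP (M.resetDirac h0.1).δ (afterStrat σ h0.2).act
          ((u, []) : Hist S A) m * (if visitsT T (extendH ((u, []) : Hist S A) m) then 0 else 1))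
        = if u = h0.1 then (∑ m ∈ listFin S A k, stepP M.δ (afterStrat σ h0.2).act
            ((u, []) : Hist S A) m * (if visitsT T (extendH ((u, []) : Hist S A) m) then 0 else 1)) else 0 := by
      intro u
      rw [h2 u, resetDirac_δ]
      split_ifs <;> ring
    rw [Finset.sum_congr rfl fun u _ => h3 u, Finset.sum_ite_eq' univ h0.1 _]
    rw [if_pos (mem_univ h0.1)]
    apply Finset.sum_congr rfl
    intro m _
    rw [stepP_shift M σ m h0]
    congr 1
    by_cases hv : visitsT T (extendH h0 m)
    · rw [if_pos hv, if_pos ((visitsT_shift T m h0 h0nv).mpr hv)]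
    · rw [if_neg hv, if_neg (fun hc => hv ((visitsT_shift T m h0 h0nv).mp hc))]
  rw [hD, failProb_extend M σ T k n]
  refine Finset.single_le_sum (f := fun h => M.hprob σ n h *
    ∑ m ∈ listFin S A k, stepP M.δ σ.act h m * (if visitsT T (extendH h m) then 0 else 1))
    (fun h _ => ?_) ((mem_histFinset n h0).mpr h0len)
  apply mul_nonneg (hprob_nonneg M σ n h)
  apply Finset.sum_nonneg
  intro m _
  apply mul_nonneg (stepP_nonneg M.δ_nonneg σ.act_nonneg h m)
  split_ifs <;> norm_num

lemma uniformS_pos {U : Finset S} (hU : U.Nonempty) {s : S} (hs : s ∈ U) :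
    0 < uniformS U s := by
  unfold uniformS
  rw [if_pos hs]
  have : (0 : ℝ) < U.card := by exact_mod_cast Finset.card_pos.mpr hU
  positivity

lemma filter_obs_self {V : Finset S} (hobs : ∀ s ∈ V, ∀ s' ∈ V, M.obs s = M.obs s')
    {s : S} (hs : s ∈ V) : V.filter (fun t => M.obs t = M.obs s) = V := by
  ext t
  rw [mem_filter]
  exact ⟨fun h => h.1, fun ht => ⟨ht, hobs t ht s hs⟩⟩

/-- Characterization of belief supports: every state in the belief support
after a positive-probability history is the endpoint of a positive-probability
history with the same observation sequence. -/
lemma belief_reachable (σ : Strategy S A Z M.obs) :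
    ∀ (l : List (A × S)) (x : S), 0 < M.hprobAux σ l.length x l →
    ∀ s' ∈ M.beliefOfFromAux M.suppInitF x l,
      ∃ l' : List (A × S), obsHist M.obs ((s', l') : Hist S A) = obsHist M.obs ((x, l) : Hist S A)
        ∧ 0 < M.hprobAux σ l.length s' l'
  | [], x, hpos, s', hs' => by
    rw [show M.beliefOfFromAux M.suppInitF x [] =
      M.suppInitF.filter (fun t => M.obs t = M.obs x) from rfl] at hs'
    rw [mem_filter] at hs'
    obtain ⟨hsupp, hobs⟩ := hs'
    rw [suppInitF, mem_filter] at hsupp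
    refine ⟨[], ?_, ?_⟩
    · unfold obsHist; simp [hobs]
    · rw [show (([] : List (A × S)).length) = 0 from rfl, hprobAux_zero, if_pos rfl]
      exact hsupp.2
  | (a, y) :: l, x, hpos, s', hs' => by
    obtain ⟨h1, h2, h3⟩ := hprobAux_cons_pos M σ hpos
    rw [show M.beliefOfFromAux M.suppInitF x ((a, y) :: l)
        = M.updateF (M.beliefOfFromAux M.suppInitF y l) (M.obs x) a from rfl] at hs'
    rw [updateF, mem_filter] at hs'
    obtain ⟨-, hobs', u, hu, hδ⟩ := hs'
    obtain ⟨l'', hobsEq, hpos''⟩ := belief_reachable σ l y h1 u hu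
    unfold obsHist at hobsEq
    simp only [Prod.mk.injEq] at hobsEq
    obtain ⟨hobsu, hmap⟩ := hobsEq
    have hlen : l''.length = l.length := by
      have := congrArg List.length hmap
      simpa using this
    refine ⟨(a, u) :: l'', ?_, ?_⟩
    · unfold obsHist
      simp only [Prod.mk.injEq, List.map_cons]
      exact ⟨hobs', by rw [hobsu, hmap]⟩
    · show 0 < M.hprobAux σ (l.length + 1) s' ((a, u) :: l'')
      have e : M.hprobAux σ (l.length + 1) s' ((a, u) :: l'')
          = M.hprobAux σ l.length u l'' * σ.act ((u, l'') : Hist S A) a * M.δ u a s' := by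
        rw [← hlen]
        rfl
      rw [e]
      have hact : σ.act ((u, l'') : Hist S A) a = σ.act ((y, l) : Hist S A) a := by
        rw [σ.obsBased ((u, l'') : Hist S A) ((y, l) : Hist S A)
          (by unfold obsHist; simp only [Prod.mk.injEq]; exact ⟨hobsu, hmap⟩)]
      rw [hact]
      have hp2 : 0 < M.hprobAux σ l.length u l'' := hpos''
      exact mul_pos (mul_pos hp2 h2) hδ

lemma exists_act_pos {O : S → Z} [Nonempty A] (σ : Strategy S A Z O) (g : Hist S A) :
    ∃ a, 0 < σ.act g a := by
  by_contra hc
  push_neg at hc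
  have hz : ∀ a ∈ (univ : Finset A), σ.act g a = 0 :=
    fun a _ => le_antisymm (hc a) (σ.act_nonneg g a)
  have := σ.act_sum g
  rw [Finset.sum_congr rfl hz, Finset.sum_const_zero] at this
  norm_num at this

/-- KEY (conditioning): any nonempty belief-support update along a
positive-probability history of an almost-sure winning strategy is again
almost-sure winning. -/
lemma update_mem_beliefWin (σ : Strategy S A Z M.obs) (T : Set S)
    (habs : M.Absorbing T) (hwin : M.AlmostSure T σ)
    {h : Hist S A} (hpos : 0 < M.hprob σ h.2.length h) {a : A} (ha : 0 < σ.act h a) {z : Z}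
    (hne : (M.updateF (M.beliefOfFrom M.suppInitF h) z a).Nonempty) :
    M.updateF (M.beliefOfFrom M.suppInitF h) z a ∈ M.BeliefWin T := by
  set V' := M.updateF (M.beliefOfFrom M.suppInitF h) z a with hV'
  have hobsV' : ∀ s ∈ V', ∀ s' ∈ V', M.obs s = M.obs s' := by
    intro s hs s' hs'
    rw [hV', updateF, mem_filter] at hs hs'
    rw [hs.2.1, hs'.2.1]
  set τ := afterStrat σ ((a, h.1) :: h.2) with hτ
  refine ⟨hne, hobsV', τ, ?_⟩
  apply almostSure_of_dirac
  intro t hini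
  show (M.resetDirac t).AlmostSure T τ
  have htV : t ∈ V' := uniformS_mem hini
  by_cases htT : t ∈ T
  · exact almostSure_resetDirac_of_target M τ T htT
  -- main case
  rw [hV', updateF, mem_filter] at htV
  obtain ⟨-, htz, s'', hs'', hδ⟩ := htV
  obtain ⟨l', hobsEq, hpos'⟩ := belief_reachable M σ h.2 h.1 hpos s'' hs''
  unfold obsHist at hobsEq
  simp only [Prod.mk.injEq] at hobsEq
  obtain ⟨hobs'', hmap'⟩ := hobsEq
  have hlen' : l'.length = h.2.length := by
    have := congrArg List.length hmap'; simpa using this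
  set h0 : Hist S A := (t, (a, s'') :: l') with hh0
  have h0len : h0.2.length = h.2.length + 1 := by simp [hh0, hlen']
  have hath : σ.act ((s'', l') : Hist S A) a = σ.act h a := by
    have hobsEq2 : obsHist M.obs ((s'', l') : Hist S A) = obsHist M.obs h := by
      unfold obsHist
      simp only [Prod.mk.injEq]
      exact ⟨hobs'', hmap'⟩
    exact congrFun (σ.obsBased ((s'', l') : Hist S A) h hobsEq2) a
  have hposh0 : 0 < M.hprob σ (h.2.length + 1) h0 := by
    have e : M.hprob σ (h.2.length + 1) h0
        = M.hprobAux σ h.2.length s'' l' * σ.act ((s'', l') : Hist S A) a * M.δ s'' a t := by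
      rw [hh0]
      show M.hprobAux σ (h.2.length + 1) t ((a, s'') :: l') = _
      rw [← hlen']
      rfl
    rw [e, hath]
    exact mul_pos (mul_pos hpos' ha) hδ
  have h0nv : ¬ visitsT T h0 := by
    have hlen2 : ((a, s'') :: l').length = h.2.length + 1 := by simp [hlen']
    have hp : 0 < M.hprobAux σ ((a, s'') :: l').length t ((a, s'') :: l') := by
      rw [hlen2]; exact hposh0
    exact not_visitsT_of_pos M σ T habs ((a, s'') :: l') t hp htT
  -- act of τ agrees with act of afterStrat σ h0.2
  have hactτ : τ.act = (afterStrat σ h0.2).act := by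
    rw [hτ, hh0]
    apply afterStrat_act_congr
    simp only [List.map_cons]
    rw [hobs'', hmap']
  -- conclude
  unfold AlmostSure probReach
  apply ciSup_eq_one_of _ (fun n => probReachBy_le_one (M.resetDirac t) τ T n)
  intro ε hε
  have hppos : 0 < M.hprob σ (h.2.length + 1) h0 := hposh0
  obtain ⟨ν, hν⟩ := exists_ge_of_ciSup_eq_one _ hwin (mul_pos hε hppos)
  refine ⟨ν, ?_⟩
  have hfail : M.failProb σ T ((h.2.length + 1) + ν) ≤ ε * M.hprob σ (h.2.length + 1) h0 := by
    rw [failProb_eq]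
    have hmono := probReachBy_mono M σ T (Nat.le_add_left ν (h.2.length + 1))
    linarith
  have hkey := failProb_after_le M σ T h0len h0nv ν
  have hτeq : (M.resetDirac t).failProb τ T ν
      = (M.resetDirac h0.1).failProb (afterStrat σ h0.2) T ν := by
    rw [show h0.1 = t from rfl]
    exact failProb_congr_act (M.resetDirac t) τ (afterStrat σ h0.2) hactτ T ν
  rw [show (M.resetDirac t).failProb τ T ν = 1 - (M.resetDirac t).probReachBy T τ ν from
    failProb_eq (M.resetDirac t) τ T ν] at hτeq
  have hfd : M.hprob σ (h.2.length + 1) h0 * (1 - (M.resetDirac t).probReachBy T τ ν)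
      ≤ ε * M.hprob σ (h.2.length + 1) h0 := by
    rw [hτeq]
    exact le_trans hkey hfail
  nlinarith [hppos]

lemma absorbing_reinit (T : Set S) (U : Finset S) (hU : U.Nonempty) (hobs)
    (habs : M.Absorbing T) : (M.reinit U hU hobs).Absorbing T := habs

/-- From a winning belief support, the set of allowed actions is nonempty. -/
lemma allow_nonempty [Nonempty A] (T : Set S) (habs : M.Absorbing T) {V : Finset S}
    (hV : V ∈ M.BeliefWin T) : (M.allowFin T V).Nonempty := by
  obtain ⟨hVne, hobsV, σ, hwin⟩ := hV
  obtain ⟨s, hs⟩ := hVne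
  set M' := M.reinit V ⟨s, hs⟩ hobsV with hM'
  obtain ⟨a, ha⟩ := exists_act_pos σ ((s, []) : Hist S A)
  refine ⟨a, ?_⟩
  rw [allowFin, mem_filter]
  refine ⟨mem_univ a, ?_⟩
  intro z hne
  have hpos : 0 < M'.hprob σ (([] : List (A × S)).length) ((s, []) : Hist S A) := by
    show 0 < M'.hprobAux σ 0 s []
    rw [hprobAux_zero, if_pos rfl]
    exact uniformS_pos ⟨s, hs⟩ hs
  have hbel : M'.beliefOfFrom M'.suppInitF ((s, []) : Hist S A) = V := by
    rw [beliefOfFrom_reinit M V ⟨s, hs⟩ hobsV, suppInitF_reinit M V ⟨s, hs⟩ hobsV]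
    show M.beliefOfFromAux V s [] = V
    rw [show M.beliefOfFromAux V s [] = V.filter (fun t => M.obs t = M.obs s) from rfl]
    exact filter_obs_self M hobsV hs
  have hne' : (M'.updateF (M'.beliefOfFrom M'.suppInitF ((s, []) : Hist S A)) z a).Nonempty := by
    rw [updateF_reinit M V ⟨s, hs⟩ hobsV, hbel]
    exact hne
  have := update_mem_beliefWin M' σ T (absorbing_reinit M T V ⟨s, hs⟩ hobsV habs)
    (by convert hwin using 2) hpos ha hne'
  rw [updateF_reinit M V ⟨s, hs⟩ hobsV, hbel, beliefWin_reinit M V ⟨s, hs⟩ hobsV] at this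
  exact this

end POMDP

namespace POMDP
variable {S A Z : Type} [Fintype S] [Fintype A] [Fintype Z]

variable (M : POMDP S A Z) (T : Set S)

/-- One step of the allowed-action forward reachability operator. -/
def stepF (R : Finset (S × Finset S)) : Finset (S × Finset S) :=
  univ.filter (fun p => ∃ a ∈ M.allowFin T p.2, ∃ t, 0 < M.δ p.1 a t ∧
    (t, M.updateF p.2 (M.obs t) a) ∈ R)

/-- Pairs (state, belief-support) from which `T` is reachable within `k`
allowed steps. -/
def RF : ℕ → Finset (S × Finset S)
  | 0 => univ.filter (fun p => p.1 ∈ T)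
  | k+1 => RF k ∪ M.stepF T (RF k)

lemma RF_succ (k : ℕ) : M.RF T (k+1) = M.RF T k ∪ M.stepF T (M.RF T k) := rfl

lemma RF_mono_succ (k : ℕ) : M.RF T k ⊆ M.RF T (k+1) := Finset.subset_union_left

lemma RF_mono {k k' : ℕ} (h : k ≤ k') : M.RF T k ⊆ M.RF T k' := by
  induction h with
  | refl => exact Finset.Subset.refl _
  | step _ ih => exact ih.trans (RF_mono_succ M T _)

lemma RF_eq_succ_of_eq {k : ℕ} (h : M.RF T k = M.RF T (k+1)) :
    ∀ m, k ≤ m → M.RF T m = M.RF T k := by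
  intro m hm
  induction hm with
  | refl => rfl
  | step _ ih => rw [RF_succ, ih, ← RF_succ, ← h]

lemma RF_stabilize : ∃ n ≤ Fintype.card (S × Finset S), M.RF T n = M.RF T (n+1) := by
  by_contra hc
  push_neg at hc
  set N := Fintype.card (S × Finset S) with hN
  have hcard : ∀ n, n ≤ N + 1 → n ≤ (M.RF T n).card := by
    intro n
    induction n with
    | zero => intro _; exact Nat.zero_le _
    | succ n ih =>
      intro hn
      have hn' : n ≤ N := Nat.lt_succ_iff.mp hn
      have hss : M.RF T n ⊂ M.RF T (n+1) :=
        Finset.ssubset_iff_subset_ne.mpr ⟨RF_mono_succ M T n, hc n hn'⟩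
      calc n + 1 ≤ (M.RF T n).card + 1 := by
            have := ih (le_trans (Nat.le_succ n) hn)
            omega
        _ ≤ (M.RF T (n+1)).card := Finset.card_lt_card hss
  have h1 := hcard (N+1) (le_refl _)
  have h2 : (M.RF T (N+1)).card ≤ N := by
    rw [hN]
    exact le_trans (Finset.card_le_univ _) (le_of_eq (Finset.card_univ))
  omega

lemma RF_subset_card (k : ℕ) : M.RF T k ⊆ M.RF T (Fintype.card (S × Finset S)) := by
  obtain ⟨n, hn, he⟩ := RF_stabilize M T
  by_cases hk : k ≤ Fintype.card (S × Finset S)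
  · exact RF_mono M T hk
  · have h1 : M.RF T k = M.RF T n := RF_eq_succ_of_eq M T he k (by omega)
    rw [h1]
    exact RF_mono M T hn

def startState : S → List (A × S) → S
  | x, [] => x
  | _, (_, y) :: l => startState y l

lemma startState_cons (x y : S) (a : A) (l : List (A × S)) :
    startState x ((a, y) :: l) = startState y l := rfl

lemma startState_dirac (σ : Strategy S A Z M.obs) (t : S) :
    ∀ (l : List (A × S)) (x : S), 0 < (M.resetDirac t).hprobAux σ l.length x l →
      startState x l = t
  | [], x, hp => by
    have hx : x = t := by
      by_contra hne
      have hz : (M.resetDirac t).hprobAux σ ([] : List (A × S)).length x [] = 0 := by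
        show (M.resetDirac t).hprobAux σ 0 x [] = 0
        rw [hprobAux_zero, if_pos rfl]
        show (if x = t then (1:ℝ) else 0) = 0
        rw [if_neg hne]
      rw [hz] at hp
      exact lt_irrefl 0 hp
    simp [startState, hx]
  | (a, y) :: l, x, hp => by
    obtain ⟨h1, -, -⟩ := hprobAux_cons_pos (M.resetDirac t) σ hp
    rw [startState_cons]
    exact startState_dirac σ t l y h1

/-- Along any positive-probability history (from the uniform distribution on a
winning `V`), if the endpoint pair is in `RF k`, the start pair is in
`RF (k + length)`. -/
lemma rf_of_path [Nonempty A] (habs : M.Absorbing T) {V : Finset S} (hVne : V.Nonempty)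
    (hobsV : ∀ s ∈ V, ∀ s' ∈ V, M.obs s = M.obs s')
    (σ : Strategy S A Z M.obs) (hwin : (M.reinit V hVne hobsV).AlmostSure T σ) :
    ∀ (l : List (A × S)) (x : S) (k : ℕ),
      0 < (M.reinit V hVne hobsV).hprobAux σ l.length x l →
      (x, M.beliefOfFromAux V x l) ∈ M.RF T k →
      (startState x l, V) ∈ M.RF T (k + l.length)
  | [], x, k, hpos, hrf => by
    have hx : x ∈ V := by
      have : 0 < (M.reinit V hVne hobsV).init x := by
        have h0 : (M.reinit V hVne hobsV).hprobAux σ ([] : List (A × S)).length x []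
            = (M.reinit V hVne hobsV).init x := by
          show (M.reinit V hVne hobsV).hprobAux σ 0 x [] = _
          rw [hprobAux_zero, if_pos rfl]
        rw [h0] at hpos
        exact hpos
      exact uniformS_mem this
    have hbel : M.beliefOfFromAux V x [] = V := by
      rw [show M.beliefOfFromAux V x [] = V.filter (fun t => M.obs t = M.obs x) from rfl]
      exact filter_obs_self M hobsV hx
    rw [hbel] at hrf
    simpa [startState] using hrf
  | (a, y) :: l, x, k, hpos, hrf => by
    obtain ⟨h1, h2, h3⟩ := hprobAux_cons_pos (M.reinit V hVne hobsV) σ hpos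
    have hbel : M.beliefOfFromAux V x ((a, y) :: l)
        = M.updateF (M.beliefOfFromAux V y l) (M.obs x) a := rfl
    have hallow : a ∈ M.allowFin T (M.beliefOfFromAux V y l) := by
      rw [allowFin, mem_filter]
      refine ⟨mem_univ a, ?_⟩
      intro z hnez
      have hbelM' : (M.reinit V hVne hobsV).beliefOfFrom
          (M.reinit V hVne hobsV).suppInitF ((y, l) : Hist S A) = M.beliefOfFromAux V y l := by
        rw [beliefOfFrom_reinit, suppInitF_reinit]
        rfl
      have hne' : ((M.reinit V hVne hobsV).updateF ((M.reinit V hVne hobsV).beliefOfFrom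
          (M.reinit V hVne hobsV).suppInitF ((y, l) : Hist S A)) z a).Nonempty := by
        rw [updateF_reinit, hbelM']
        exact hnez
      have hkey := update_mem_beliefWin (M.reinit V hVne hobsV) σ T
        (absorbing_reinit M T V hVne hobsV habs) hwin (h := ((y, l) : Hist S A)) h1 h2 hne'
      rw [updateF_reinit, hbelM', beliefWin_reinit] at hkey
      exact hkey
    have hstep : (y, M.beliefOfFromAux V y l) ∈ M.RF T (k+1) := by
      rw [RF_succ]
      apply Finset.mem_union_right
      rw [stepF, mem_filter]
      refine ⟨mem_univ _, a, hallow, x, h3, ?_⟩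
      rw [← hbel]
      exact hrf
    have ih := rf_of_path habs hVne hobsV σ hwin l y (k+1) h1 hstep
    rw [startState_cons]
    have he : k + 1 + l.length = k + ((a, y) :: l).length := by
      simp [List.length_cons]; omega
    rw [← he]
    exact ih

/-- From a winning belief support `V` and any `s ∈ V`, the pair `(s,V)` can
reach `T` within `card (S × Finset S)` allowed steps. -/
lemma mem_RF_of_beliefWin [Nonempty A] (habs : M.Absorbing T) {V : Finset S}
    (hV : V ∈ M.BeliefWin T) {s : S} (hs : s ∈ V) :
    (s, V) ∈ M.RF T (Fintype.card (S × Finset S)) := by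
  obtain ⟨hVne, hobsV, σ, hwin⟩ := hV
  set M' := M.reinit V hVne hobsV with hM'
  have hdir : (M'.resetDirac s).AlmostSure T σ :=
    almostSure_dirac M' σ T hwin (show (0:ℝ) < M'.init s from uniformS_pos hVne hs)
  obtain ⟨n, hn⟩ : ∃ n, 0 < (M'.resetDirac s).probReachBy T σ n := by
    by_contra hc
    push_neg at hc
    have h0 : (M'.resetDirac s).probReach T σ ≤ 0 := ciSup_le hc
    rw [hdir] at h0
    norm_num at h0
  obtain ⟨H, hH, hvis, hpos⟩ :
      ∃ H ∈ histFinset S A n, visitsT T H ∧ 0 < (M'.resetDirac s).hprob σ n H := by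
    rw [probReachBy_eq_sum] at hn
    by_contra hc
    push_neg at hc
    have hterm : ∀ H ∈ histFinset S A n,
        (if visitsT T H then (M'.resetDirac s).hprob σ n H else 0) ≤ 0 := by
      intro H hmem
      split_ifs with hv
      · rcases eq_or_lt_of_le (hprob_nonneg (M'.resetDirac s) σ n H) with h0 | h0
        · exact le_of_eq h0.symm
        · exact absurd h0 (by
            intro hgt
            exact absurd hgt (by
              have := hc H hmem hv
              exact not_lt.mpr this))
      · exact le_refl 0
    have := Finset.sum_nonpos hterm
    linarith
  obtain ⟨x, l⟩ := H
  have hlen : l.length = n := (mem_histFinset n (x, l)).mp hH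
  have hposD : 0 < (M'.resetDirac s).hprobAux σ l.length x l := by
    rw [hlen]
    exact hpos
  have hposM' : 0 < M'.hprobAux σ l.length x l := by
    rw [hprobAux_dirac M' σ l.length x l]
    have hsingle : M'.init s * (M'.resetDirac s).hprobAux σ l.length x l
        ≤ ∑ u, M'.init u * (M'.resetDirac u).hprobAux σ l.length x l :=
      Finset.single_le_sum (f := fun u => M'.init u * (M'.resetDirac u).hprobAux σ l.length x l)
        (fun u _ => mul_nonneg (M'.init_nonneg u) (hprobAux_nonneg (M'.resetDirac u) σ l.length x l))
        (mem_univ s)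
    have : 0 < M'.init s * (M'.resetDirac s).hprobAux σ l.length x l :=
      mul_pos (uniformS_pos hVne hs) hposD
    linarith
  have hxT : x ∈ T := head_mem_T_of_visits M' σ T (absorbing_reinit M T V hVne hobsV habs)
    hposM' hvis
  have hrf0 : (x, M.beliefOfFromAux V x l) ∈ M.RF T 0 := by
    rw [show M.RF T 0 = univ.filter (fun p => p.1 ∈ T) from rfl, mem_filter]
    exact ⟨mem_univ _, hxT⟩
  have hpath := rf_of_path M T habs hVne hobsV σ hwin l x 0 hposM' hrf0
  have hstart : startState x l = s := startState_dirac M' σ s l x hposD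
  rw [hstart] at hpath
  rw [Nat.zero_add] at hpath
  exact RF_subset_card M T l.length hpath

end POMDP

namespace POMDP
variable {S A Z : Type} [Fintype S] [Fintype A] [Fintype Z]

variable (M : POMDP S A Z)

def dminF : Finset (S × A × S) := univ.filter (fun p => 0 < M.δ p.1 p.2.1 p.2.2)

def dmin : ℝ :=
  if h : (M.dminF).Nonempty then M.dminF.inf' h (fun p => M.δ p.1 p.2.1 p.2.2) else 1

lemma dmin_pos : 0 < M.dmin := by
  unfold dmin
  split_ifs with h
  · rw [Finset.lt_inf'_iff]
    intro p hp
    exact (mem_filter.mp hp).2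
  · norm_num

lemma δ_le_one (s : S) (a : A) (t : S) : M.δ s a t ≤ 1 := by
  have h1 := M.δ_sum s a
  have h2 : M.δ s a t ≤ ∑ t', M.δ s a t' :=
    Finset.single_le_sum (fun t' _ => M.δ_nonneg s a t') (mem_univ t)
  linarith

lemma dmin_le_one : M.dmin ≤ 1 := by
  unfold dmin
  split_ifs with h
  · obtain ⟨p, hp⟩ := h
    exact le_trans (Finset.inf'_le _ hp) (δ_le_one M _ _ _)
  · exact le_refl 1

lemma dmin_le {s : S} {a : A} {t : S} (h : 0 < M.δ s a t) : M.dmin ≤ M.δ s a t := by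
  have hmem : (s, a, t) ∈ M.dminF := mem_filter.mpr ⟨mem_univ _, h⟩
  unfold dmin
  rw [dif_pos ⟨_, hmem⟩]
  exact Finset.inf'_le _ hmem

section PathCtx

variable [Nonempty A] (T : Set S) (U : Finset S)

lemma invA_pos : (0:ℝ) < ((Fintype.card A : ℝ))⁻¹ := by
  have : (0:ℝ) < (Fintype.card A : ℝ) := by exact_mod_cast Fintype.card_pos
  positivity

lemma invA_le_one : ((Fintype.card A : ℝ))⁻¹ ≤ 1 := by
  have h1 : (1:ℝ) ≤ (Fintype.card A : ℝ) := by exact_mod_cast Fintype.card_pos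
  rw [inv_le_one_iff₀]
  right; exact h1

lemma actAllow_nonneg (h : Hist S A) (a : A) : 0 ≤ M.actAllowFrom T U h a := by
  unfold actAllowFrom
  split_ifs <;> exact uniformA_nonneg _ _

lemma actAllow_ge (h : Hist S A) {a : A} (ha : a ∈ M.allowFin T (M.beliefOfFrom U h)) :
    ((Fintype.card A : ℝ))⁻¹ ≤ M.actAllowFrom T U h a := by
  unfold actAllowFrom
  rw [if_pos ⟨a, ha⟩]
  unfold uniformA
  rw [if_pos ha]
  have h0 : (0:ℝ) < ((M.allowFin T (M.beliefOfFrom U h)).card : ℝ) := by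
    exact_mod_cast Finset.card_pos.mpr ⟨a, ha⟩
  have hle : ((M.allowFin T (M.beliefOfFrom U h)).card : ℝ) ≤ (Fintype.card A : ℝ) := by
    exact_mod_cast le_trans (Finset.card_le_univ _) (le_of_eq Finset.card_univ)
  rw [← one_div, ← one_div]
  exact one_div_le_one_div_of_le h0 hle

def pickA (h : Hist S A) : A :=
  if hne : (M.allowFin T (M.beliefOfFrom U h)).Nonempty then hne.choose
  else Classical.arbitrary A

lemma actAllow_pick_ge (h : Hist S A) :
    ((Fintype.card A : ℝ))⁻¹ ≤ M.actAllowFrom T U h (M.pickA T U h) := by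
  unfold pickA
  split_ifs with hne
  · exact actAllow_ge M T U h hne.choose_spec
  · unfold actAllowFrom
    rw [if_neg hne]
    unfold uniformA
    rw [if_pos (mem_univ _), Finset.card_univ]

lemma beliefOfFrom_extend_cons (h : Hist S A) (m : List (A × S)) (a : A) (t : S) :
    M.beliefOfFrom U (extendH h ((a, t) :: m))
      = M.updateF (M.beliefOfFrom U (extendH h m)) (M.obs t) a := rfl

/-- Explicit path construction: from any pair in `RF k` there is a `k`-step
continuation that ends in `T` and has `stepP` at least `(dmin / |A|)^k`. -/
lemma pathP (habs : M.Absorbing T) :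
    ∀ (k : ℕ) (h : Hist S A), (h.1, M.beliefOfFrom U h) ∈ M.RF T k →
      ∃ m : List (A × S), m.length = k ∧ (extendH h m).1 ∈ T ∧
        (M.dmin * ((Fintype.card A : ℝ))⁻¹)^k ≤ stepP M.δ (M.actAllowFrom T U) h m
  | 0, h, hrf => by
    refine ⟨[], rfl, ?_, by norm_num [stepP]⟩
    have := (mem_filter.mp (show (h.1, M.beliefOfFrom U h) ∈
      univ.filter (fun p : S × Finset S => p.1 ∈ T) from hrf)).2
    exact this
  | k+1, h, hrf => by
    have hd := M.dmin_pos
    have hd1 := M.dmin_le_one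
    have hi := invA_pos (A := A)
    have hi1 := invA_le_one (A := A)
    rw [RF_succ] at hrf
    rcases Finset.mem_union.mp hrf with hrf | hrf
    · obtain ⟨m, hlen, hT, hstep⟩ := pathP habs k h hrf
      refine ⟨(M.pickA T U (extendH h m), (extendH h m).1) :: m, by simp [hlen], hT, ?_⟩
      have hδ1 : M.δ (extendH h m).1 (M.pickA T U (extendH h m)) (extendH h m).1 = 1 :=
        habs _ hT _
      have hact := actAllow_pick_ge M T U (extendH h m)
      have hsp0 : 0 ≤ stepP M.δ (M.actAllowFrom T U) h m :=
        stepP_nonneg M.δ_nonneg (actAllow_nonneg M T U) h m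
      simp only [stepP]
      rw [hδ1, mul_one]
      calc (M.dmin * ((Fintype.card A : ℝ))⁻¹)^(k+1)
          = (M.dmin * ((Fintype.card A : ℝ))⁻¹)^k * (M.dmin * ((Fintype.card A : ℝ))⁻¹) :=
            pow_succ _ _
        _ ≤ stepP M.δ (M.actAllowFrom T U) h m * (M.dmin * ((Fintype.card A : ℝ))⁻¹) :=
            mul_le_mul_of_nonneg_right hstep (by positivity)
        _ ≤ stepP M.δ (M.actAllowFrom T U) h m *
              M.actAllowFrom T U (extendH h m) (M.pickA T U (extendH h m)) := by
            apply mul_le_mul_of_nonneg_left _ hsp0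
            calc M.dmin * ((Fintype.card A : ℝ))⁻¹ ≤ 1 * ((Fintype.card A : ℝ))⁻¹ :=
                  mul_le_mul_of_nonneg_right hd1 (le_of_lt hi)
              _ = ((Fintype.card A : ℝ))⁻¹ := one_mul _
              _ ≤ _ := hact
    · rw [stepF, mem_filter] at hrf
      obtain ⟨-, a, ha, t, hδ, hrf'⟩ := hrf
      have hbel1 : M.beliefOfFrom U (extendH h [(a, t)])
          = M.updateF (M.beliefOfFrom U h) (M.obs t) a := rfl
      have hh1 : (extendH h [(a, t)]).1 = t := rfl
      obtain ⟨m, hlen, hT, hstep⟩ := pathP habs k (extendH h [(a, t)]) (by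
        rw [hh1, hbel1]; exact hrf')
      refine ⟨m ++ [(a, t)], by simp [hlen], ?_, ?_⟩
      · rw [extendH_append]; exact hT
      · rw [stepP_append]
        have hs1 : stepP M.δ (M.actAllowFrom T U) h [(a, t)]
            = 1 * M.actAllowFrom T U h a * M.δ h.1 a t := rfl
        have hact : ((Fintype.card A : ℝ))⁻¹ ≤ M.actAllowFrom T U h a :=
          actAllow_ge M T U h ha
        have hδd : M.dmin ≤ M.δ h.1 a t := M.dmin_le hδ
        have hsp0 : 0 ≤ stepP M.δ (M.actAllowFrom T U) (extendH h [(a, t)]) m :=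
          stepP_nonneg M.δ_nonneg (actAllow_nonneg M T U) _ m
        rw [hs1]
        calc (M.dmin * ((Fintype.card A : ℝ))⁻¹)^(k+1)
            = (M.dmin * ((Fintype.card A : ℝ))⁻¹)^k * (M.dmin * ((Fintype.card A : ℝ))⁻¹) :=
              pow_succ _ _
          _ ≤ stepP M.δ (M.actAllowFrom T U) (extendH h [(a, t)]) m *
                (M.dmin * ((Fintype.card A : ℝ))⁻¹) :=
              mul_le_mul_of_nonneg_right hstep (by positivity)
          _ ≤ stepP M.δ (M.actAllowFrom T U) (extendH h [(a, t)]) m *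
                (M.δ h.1 a t * M.actAllowFrom T U h a) := by
              apply mul_le_mul_of_nonneg_left _ hsp0
              exact mul_le_mul hδd hact (le_of_lt hi) (M.δ_nonneg _ _ _)
          _ = 1 * M.actAllowFrom T U h a * M.δ h.1 a t *
                stepP M.δ (M.actAllowFrom T U) (extendH h [(a, t)]) m := by ring

end PathCtx

end POMDP

namespace POMDP
variable {S A Z : Type} [Fintype S] [Fintype A] [Fintype Z]

variable (M : POMDP S A Z) (T : Set S)

/-- Along positive-probability histories of `σ_Allow`, the tracked
belief-support contains the current state and is almost-sure winning. -/
lemma stratAllow_invariant [Nonempty A] (habs : M.Absorbing T)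
    {U : Finset S} (hmem : U ∈ M.BeliefWin T) (hU : U.Nonempty)
    (hobs : ∀ s ∈ U, ∀ s' ∈ U, M.obs s = M.obs s') :
    ∀ (l : List (A × S)) (x : S),
      0 < (M.reinit U hU hobs).hprobAux (M.stratAllowFrom T U) l.length x l →
      x ∈ M.beliefOfFromAux U x l ∧ M.beliefOfFromAux U x l ∈ M.BeliefWin T
  | [], x, hpos => by
    have hx : x ∈ U := by
      apply uniformS_mem (U := U) (s := x)
      show 0 < uniformS U x
      have h0 : (M.reinit U hU hobs).hprobAux (M.stratAllowFrom T U)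
          ([] : List (A × S)).length x [] = uniformS U x := by
        show (M.reinit U hU hobs).hprobAux (M.stratAllowFrom T U) 0 x [] = _
        rw [hprobAux_zero, if_pos rfl]
      rw [h0] at hpos
      exact hpos
    have hbel : M.beliefOfFromAux U x [] = U := by
      rw [show M.beliefOfFromAux U x [] = U.filter (fun t => M.obs t = M.obs x) from rfl]
      exact filter_obs_self M hobs hx
    rw [hbel]
    exact ⟨hx, hmem⟩
  | (a, y) :: l, x, hpos => by
    obtain ⟨h1, h2, h3⟩ := hprobAux_cons_pos (M.reinit U hU hobs) (M.stratAllowFrom T U) hpos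
    obtain ⟨hy, hwinB⟩ := stratAllow_invariant habs hmem hU hobs l y h1
    have hne : (M.allowFin T (M.beliefOfFromAux U y l)).Nonempty :=
      allow_nonempty M T habs hwinB
    have ha : a ∈ M.allowFin T (M.beliefOfFromAux U y l) := by
      have hact : (M.stratAllowFrom T U).act ((y, l) : Hist S A) a
          = uniformA (M.allowFin T (M.beliefOfFromAux U y l)) a := by
        show M.actAllowFrom T U ((y, l) : Hist S A) a = _
        unfold actAllowFrom
        rw [if_pos (show (M.allowFin T (M.beliefOfFrom U ((y, l) : Hist S A))).Nonempty
          from hne)]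
        rfl
      rw [hact] at h2
      by_contra hc
      unfold uniformA at h2
      rw [if_neg hc] at h2
      exact lt_irrefl 0 h2
    have hx : x ∈ M.updateF (M.beliefOfFromAux U y l) (M.obs x) a := by
      rw [updateF, mem_filter]
      exact ⟨mem_univ x, rfl, y, hy, h3⟩
    have hbel : M.beliefOfFromAux U x ((a, y) :: l)
        = M.updateF (M.beliefOfFromAux U y l) (M.obs x) a := rfl
    rw [hbel]
    refine ⟨hx, ?_⟩
    have hAS : a ∈ M.AllowSet T (M.beliefOfFromAux U y l) := (mem_filter.mp ha).2
    exact hAS (M.obs x) ⟨x, hx⟩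

/-- One-round contraction of the failure probability under `σ_Allow`. -/
lemma failProb_contract [Nonempty A] (habs : M.Absorbing T)
    {U : Finset S} (hmem : U ∈ M.BeliefWin T) (hU : U.Nonempty)
    (hobs : ∀ s ∈ U, ∀ s' ∈ U, M.obs s = M.obs s') (n : ℕ) :
    (M.reinit U hU hobs).failProb (M.stratAllowFrom T U) T (n + Fintype.card (S × Finset S))
      ≤ (1 - (M.dmin * ((Fintype.card A : ℝ))⁻¹) ^ Fintype.card (S × Finset S)) *
        (M.reinit U hU hobs).failProb (M.stratAllowFrom T U) T n := by
  set Mr := M.reinit U hU hobs with hMr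
  set σA := M.stratAllowFrom T U with hσA
  set N := Fintype.card (S × Finset S) with hN
  set η := (M.dmin * ((Fintype.card A : ℝ))⁻¹) ^ N with hη
  have hδeq : stepP Mr.δ σA.act = stepP M.δ (M.actAllowFrom T U) := rfl
  have hη0 : 0 < η := by
    rw [hη]
    have := M.dmin_pos
    have := invA_pos (A := A)
    positivity
  have hη1 : η ≤ 1 := by
    rw [hη]
    apply pow_le_one₀ (le_of_lt (mul_pos M.dmin_pos (invA_pos (A := A))))
    calc M.dmin * ((Fintype.card A : ℝ))⁻¹ ≤ 1 * ((Fintype.card A : ℝ))⁻¹ :=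
        mul_le_mul_of_nonneg_right M.dmin_le_one (le_of_lt (invA_pos (A := A)))
      _ = ((Fintype.card A : ℝ))⁻¹ := one_mul _
      _ ≤ 1 := invA_le_one (A := A)
  rw [failProb_extend Mr σA T N n]
  have hfp : Mr.failProb σA T n
      = ∑ h ∈ histFinset S A n, (if visitsT T h then 0 else Mr.hprob σA n h) := rfl
  rw [hfp, Finset.mul_sum]
  apply Finset.sum_le_sum
  intro h hmemh
  have hlen : h.2.length = n := (mem_histFinset n h).mp hmemh
  rcases eq_or_lt_of_le (hprob_nonneg Mr σA n h) with h0 | h0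
  · rw [← h0, zero_mul]
    split_ifs <;> simp [← h0]
  · -- positive probability
    have hinv := stratAllow_invariant M T habs hmem hU hobs h.2 h.1
      (by rw [hlen]; obtain ⟨x, l⟩ := h; exact h0)
    obtain ⟨hxB, hBwin⟩ := hinv
    by_cases hv : visitsT T h
    · -- everything visits
      rw [if_pos hv, mul_zero]
      have hz : ∀ m ∈ listFin S A N, stepP Mr.δ σA.act h m *
          (if visitsT T (extendH h m) then 0 else 1) = 0 := by
        intro m _
        rw [if_pos ((visitsT_extendH T m h).mpr (Or.inl hv)), mul_zero]
      rw [Finset.sum_congr rfl hz, Finset.sum_const_zero, mul_zero]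
    · rw [if_neg hv]
      -- get the witness path
      have hrf : (h.1, M.beliefOfFrom U h) ∈ M.RF T N := by
        apply mem_RF_of_beliefWin M T habs hBwin
        exact hxB
      obtain ⟨mstar, hmlen, hmT, hmstep⟩ := pathP M T U habs N h hrf
      have hmmem : mstar ∈ listFin S A N := (mem_listFin N mstar).mpr hmlen
      have hvis_star : visitsT T (extendH h mstar) := Or.inl hmT
      -- inner sum ≤ 1 - η
      have hinner : ∑ m ∈ listFin S A N, stepP Mr.δ σA.act h m *
          (if visitsT T (extendH h m) then 0 else 1) ≤ 1 - η := by
        have hsplit : (stepP Mr.δ σA.act h mstar *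
              (if visitsT T (extendH h mstar) then 0 else 1)) +
            ∑ m ∈ (listFin S A N).erase mstar, stepP Mr.δ σA.act h m *
              (if visitsT T (extendH h m) then 0 else 1)
            = ∑ m ∈ listFin S A N, stepP Mr.δ σA.act h m *
              (if visitsT T (extendH h m) then 0 else 1) :=
          Finset.add_sum_erase (listFin S A N)
            (fun m => stepP Mr.δ σA.act h m * (if visitsT T (extendH h m) then 0 else 1))
            hmmem
        have hzstar : stepP Mr.δ σA.act h mstar *
            (if visitsT T (extendH h mstar) then 0 else 1) = 0 := by
          rw [if_pos hvis_star, mul_zero]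
        have hrest : ∑ m ∈ (listFin S A N).erase mstar, stepP Mr.δ σA.act h m *
              (if visitsT T (extendH h m) then 0 else 1)
            ≤ ∑ m ∈ (listFin S A N).erase mstar, stepP Mr.δ σA.act h m := by
          apply Finset.sum_le_sum
          intro m _
          have hsp := stepP_nonneg (d := Mr.δ) (π := σA.act) Mr.δ_nonneg σA.act_nonneg h m
          split_ifs <;> nlinarith
        have htot : stepP Mr.δ σA.act h mstar +
            ∑ m ∈ (listFin S A N).erase mstar, stepP Mr.δ σA.act h m = 1 := by
          rw [Finset.add_sum_erase (listFin S A N) (fun m => stepP Mr.δ σA.act h m) hmmem]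
          exact sum_stepP Mr σA h N
        have hstar_ge : η ≤ stepP Mr.δ σA.act h mstar := by
          rw [hδeq, hη]
          exact hmstep
        linarith [hsplit, hzstar, hrest, htot, hstar_ge]
      calc Mr.hprob σA n h * ∑ m ∈ listFin S A N, stepP Mr.δ σA.act h m *
            (if visitsT T (extendH h m) then 0 else 1)
          ≤ Mr.hprob σA n h * (1 - η) :=
            mul_le_mul_of_nonneg_left hinner (le_of_lt h0)
        _ = (1 - η) * Mr.hprob σA n h := mul_comm _ _

end POMDP

/-- The belief-support based strategy `σ_Allow` is almost-sure
winning for `Reach(T)` from every belief-support `U ∈ BeliefWin(G,T)`,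
i.e. in the POMDP reinitialized to the uniform distribution on `U`. -/
theorem stratAllow_almostSure
    {S A Z : Type} [Fintype S] [Fintype A] [Fintype Z] [Nonempty A]
    (M : POMDP S A Z) (T : Set S)
    (habs : M.Absorbing T)
    (U : Finset S) (hmem : U ∈ M.BeliefWin T)
    (hU : U.Nonempty) (hobs : ∀ s ∈ U, ∀ s' ∈ U, M.obs s = M.obs s') :
    (M.reinit U hU hobs).AlmostSure T (M.stratAllowFrom T U) := by
  set Mr := M.reinit U hU hobs with hMr
  set σA := M.stratAllowFrom T U with hσA
  set N := Fintype.card (S × Finset S) with hN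
  set η := (M.dmin * ((Fintype.card A : ℝ))⁻¹) ^ N with hη
  have hη0 : 0 < η := by
    rw [hη]
    have := M.dmin_pos
    have := POMDP.invA_pos (A := A)
    positivity
  have hη1 : η ≤ 1 := by
    rw [hη]
    apply pow_le_one₀ (le_of_lt (mul_pos M.dmin_pos (POMDP.invA_pos (A := A))))
    calc M.dmin * ((Fintype.card A : ℝ))⁻¹ ≤ 1 * ((Fintype.card A : ℝ))⁻¹ :=
        mul_le_mul_of_nonneg_right M.dmin_le_one (le_of_lt (POMDP.invA_pos (A := A)))
      _ = ((Fintype.card A : ℝ))⁻¹ := one_mul _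
      _ ≤ 1 := POMDP.invA_le_one (A := A)
  have hcontract : ∀ n, Mr.failProb σA T (n + N) ≤ (1 - η) * Mr.failProb σA T n :=
    fun n => POMDP.failProb_contract M T habs hmem hU hobs n
  have hfail0 : Mr.failProb σA T 0 ≤ 1 := by
    rw [POMDP.failProb_eq]
    have := POMDP.probReachBy_nonneg Mr σA T 0
    linarith
  have hiter : ∀ k, Mr.failProb σA T (k * N) ≤ (1 - η) ^ k := by
    intro k
    induction k with
    | zero => simpa using hfail0
    | succ k ih =>
      have he : (k + 1) * N = k * N + N := by ring
      rw [he, pow_succ]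
      calc Mr.failProb σA T (k * N + N) ≤ (1 - η) * Mr.failProb σA T (k * N) :=
            hcontract (k * N)
        _ ≤ (1 - η) * (1 - η) ^ k := by
            apply mul_le_mul_of_nonneg_left ih
            linarith [hη1]
        _ = (1 - η) ^ k * (1 - η) := mul_comm _ _
  unfold POMDP.AlmostSure POMDP.probReach
  apply POMDP.ciSup_eq_one_of _ (POMDP.probReachBy_le_one Mr σA T)
  intro ε hε
  obtain ⟨k, hk⟩ := exists_pow_lt_of_lt_one hε (show 1 - η < 1 by linarith)
  refine ⟨k * N, ?_⟩
  have h1 := hiter k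
  rw [POMDP.failProb_eq] at h1
  linarith
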